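/- arXiv:1810.04166 — 3 statements merged into one kernel-verified Lean document; each statement's English description precedes it below -/
import Mathlib

section
/- Let G = ⟨x⟩ be a cyclic group of order n and let F be a field of characteristic 0 or prime to n. Let Φ_n(X) denote the n-th cyclotomic polynomial. Then the set of isomorphism classes of faithful irreducible F-representations of G is in bijective correspondence with the set of monic irreducible factors of Φ_n(X) over F: the representation corresponding to a monic irreducible factor f(X) of Φ_n(X) is given by x ↦ C_{f(X)}, the companion matrix of f(X), and these are, up to equivalence, exactly the faithful irreducible F-representations of G. -/
open Polynomial

/-- A representation is irreducible if the space is nonzero and has no proper nonzero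
invariant subspace. -/
def IsIrreducibleRep {k G V : Type*} [CommSemiring k] [Monoid G] [AddCommMonoid V]
    [Module k V] (ρ : Representation k G V) : Prop :=
  Nontrivial V ∧
    ∀ W : Submodule k V, (∀ (g : G) (v : V), v ∈ W → ρ g v ∈ W) → W = ⊥ ∨ W = ⊤

/-- Equivalence (isomorphism) of representations. -/
def RepEquiv {k G V W : Type*} [CommSemiring k] [Monoid G] [AddCommMonoid V] [Module k V]
    [AddCommMonoid W] [Module k W]
    (ρ : Representation k G V) (σ : Representation k G W) : Prop :=
  ∃ e : V ≃ₗ[k] W, ∀ (g : G) (v : V), e (ρ g v) = σ g (e v)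

/-- The companion matrix of a (monic) polynomial `f` of degree `d`: the matrix of
multiplication by `X` on `F[X]/(f)` with respect to the basis `1, X, …, X^(d-1)`. -/
def companionMatrix {F : Type*} [Field F] (f : Polynomial F) :
    Matrix (Fin f.natDegree) (Fin f.natDegree) F :=
  Matrix.of fun i j =>
    if (j : ℕ) = f.natDegree - 1 then -f.coeff i
    else if (i : ℕ) = (j : ℕ) + 1 then 1 else 0

section Aux

variable {F : Type*} [Field F] {f : F[X]}

-- test: defeq of dims
noncomputable example (hf : f.Monic) :
    Matrix (Fin f.natDegree) (Fin f.natDegree) F :=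
  LinearMap.toMatrix (AdjoinRoot.powerBasis hf.ne_zero).basis (AdjoinRoot.powerBasis hf.ne_zero).basis
    (Algebra.lmul F (AdjoinRoot f) (AdjoinRoot.root f))

lemma root_pow_natDegree (hf : f.Monic) (hd : 0 < f.natDegree) :
    AdjoinRoot.root f ^ f.natDegree =
      ∑ i : Fin f.natDegree, (-(f.coeff i)) • (AdjoinRoot.root f) ^ (i : ℕ) := by
  set d := f.natDegree with hdd
  have hfne : f ≠ 0 := hf.ne_zero
  have h0 : (aeval (AdjoinRoot.root f)) f = 0 := by
    rw [AdjoinRoot.aeval_eq]; exact AdjoinRoot.mk_self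
  have hr : (f - X ^ d).natDegree < d := by
    by_cases h : f - X ^ d = 0
    · simp [h, hd]
    · rw [Polynomial.natDegree_lt_iff_degree_lt h]
      have := Polynomial.degree_sub_lt (p := f) (q := X ^ d) ?_ hfne ?_
      · calc (f - X^d).degree < f.degree := this
          _ = (d : WithBot ℕ) := Polynomial.degree_eq_natDegree hfne ▸ rfl
      · rw [Polynomial.degree_X_pow, Polynomial.degree_eq_natDegree hfne]
      · simp [hf.leadingCoeff, Polynomial.monic_X_pow]
  have hsplit : (aeval (AdjoinRoot.root f)) (f - X ^ d) =
      - (AdjoinRoot.root f ^ d) := by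
    rw [map_sub, h0]; simp
  have hsum := Polynomial.aeval_eq_sum_range' (x := AdjoinRoot.root f) hr
  rw [hsum] at hsplit
  have hcoeff : ∀ i ∈ Finset.range d, (f - X ^ d).coeff i • AdjoinRoot.root f ^ i
      = f.coeff i • AdjoinRoot.root f ^ i := by
    intro i hi
    rw [Finset.mem_range] at hi
    rw [Polynomial.coeff_sub, Polynomial.coeff_X_pow, if_neg hi.ne, sub_zero]
  rw [Finset.sum_congr rfl hcoeff] at hsplit
  have hval : AdjoinRoot.root f ^ d = -∑ i ∈ Finset.range d, f.coeff i • AdjoinRoot.root f ^ i := by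
    rw [hsplit, neg_neg]
  rw [hval, Fin.sum_univ_eq_sum_range (fun i => -f.coeff i • AdjoinRoot.root f ^ i) d,
    ← Finset.sum_neg_distrib]
  exact Finset.sum_congr rfl fun i _ => (neg_smul _ _).symm

lemma companion_toMatrix (hf : f.Monic) (hd : 0 < f.natDegree) :
    LinearMap.toMatrix (AdjoinRoot.powerBasis hf.ne_zero).basis
      (AdjoinRoot.powerBasis hf.ne_zero).basis
      (Algebra.lmul F (AdjoinRoot f) (AdjoinRoot.root f)) = companionMatrix f := by
  set pb := AdjoinRoot.powerBasis hf.ne_zero with hpb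
  ext i j
  have hjlt : (j : ℕ) < f.natDegree := j.isLt
  have hilt : (i : ℕ) < f.natDegree := i.isLt
  rw [LinearMap.toMatrix_apply]
  have hbj : pb.basis j = AdjoinRoot.root f ^ (j : ℕ) := by
    rw [PowerBasis.coe_basis]; rfl
  have happ : (Algebra.lmul F (AdjoinRoot f) (AdjoinRoot.root f)) (pb.basis j)
      = AdjoinRoot.root f ^ ((j : ℕ) + 1) := by
    rw [hbj, pow_succ']; rfl
  rw [happ]
  by_cases hj : (j : ℕ) = f.natDegree - 1
  · have hj1 : (j : ℕ) + 1 = f.natDegree := by omega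
    have key : AdjoinRoot.root f ^ f.natDegree
        = ∑ k : Fin pb.dim, (fun k : Fin pb.dim => -(f.coeff (k : ℕ))) k • pb.basis k := by
      rw [root_pow_natDegree hf hd]
      exact Finset.sum_congr rfl fun k _ => by rw [PowerBasis.coe_basis]; rfl
    rw [hj1, key]
    have hrepr := congrFun (pb.basis.repr_sum_self
      (fun k : Fin pb.dim => -(f.coeff (k : ℕ)))) i
    rw [hrepr]
    exact (if_pos hj).symm
  · have hlt : (j : ℕ) + 1 < f.natDegree := by omega
    have hb1 : AdjoinRoot.root f ^ ((j : ℕ) + 1) = pb.basis ⟨(j : ℕ) + 1, hlt⟩ := by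
      rw [PowerBasis.coe_basis]; rfl
    rw [hb1, Module.Basis.repr_self, Finsupp.single_apply]
    simp only [companionMatrix, Matrix.of_apply, if_neg hj]
    by_cases h : (i : ℕ) = (j : ℕ) + 1
    · exact (if_pos (Fin.ext h.symm)).trans ((if_neg hj).trans (if_pos h)).symm
    · exact (if_neg (fun hc => h (congrArg Fin.val hc).symm)).trans ((if_neg hj).trans (if_neg h)).symm

lemma conj_pow_apply {V W : Type*} [AddCommGroup V] [Module F V] [AddCommGroup W] [Module F W]
    (e : V ≃ₗ[F] W) (A : Module.End F V) (B : Module.End F W)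
    (h : ∀ v, e (A v) = B (e v)) : ∀ (k : ℕ) (v : V), e ((A ^ k) v) = (B ^ k) (e v) := by
  intro k
  induction k with
  | zero => intro v; simp
  | succ m ih =>
    intro v
    rw [pow_succ, pow_succ]
    simp only [Module.End.mul_apply]
    rw [ih (A v), h v]

lemma conj_aeval {V W : Type*} [AddCommGroup V] [Module F V] [AddCommGroup W] [Module F W]
    (e : V ≃ₗ[F] W) (A : Module.End F V) (B : Module.End F W)
    (h : ∀ v, e (A v) = B (e v)) (p : F[X]) (v : V) :
    e (aeval A p v) = aeval B p (e v) := by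
  induction p using Polynomial.induction_on' with
  | add p q hp hq =>
    simp only [map_add, LinearMap.add_apply]
    rw [hp, hq]
  | monomial k c =>
    have hp := conj_pow_apply e A B h k v
    simp only [Polynomial.aeval_monomial, Module.End.mul_apply, Module.algebraMap_end_apply,
      map_smul, hp]

lemma companion_equivFun_mul (hf : f.Monic) (hd : 0 < f.natDegree) (w : AdjoinRoot f) :
    (AdjoinRoot.powerBasis hf.ne_zero).basis.equivFun (AdjoinRoot.root f * w)
      = Matrix.toLin' (companionMatrix f)
          ((AdjoinRoot.powerBasis hf.ne_zero).basis.equivFun w) := by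
  erw [Matrix.toLin'_apply, ← companion_toMatrix hf hd, Module.Basis.equivFun_apply,
    Module.Basis.equivFun_apply]
  exact (LinearMap.toMatrix_mulVec_repr (AdjoinRoot.powerBasis hf.ne_zero).basis
    (AdjoinRoot.powerBasis hf.ne_zero).basis
    ((Algebra.lmul F (AdjoinRoot f)) (AdjoinRoot.root f)) w).symm

lemma companion_aeval_apply (hf : f.Monic) (hd : 0 < f.natDegree) (p : F[X]) (w : AdjoinRoot f) :
    (AdjoinRoot.powerBasis hf.ne_zero).basis.equivFun ((aeval (AdjoinRoot.root f) p) * w)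
      = aeval (Matrix.toLin' (companionMatrix f)) p
          ((AdjoinRoot.powerBasis hf.ne_zero).basis.equivFun w) := by
  have h := conj_aeval (AdjoinRoot.powerBasis hf.ne_zero).basis.equivFun
    (Algebra.lmul F (AdjoinRoot f) (AdjoinRoot.root f)) (Matrix.toLin' (companionMatrix f))
    (fun v => companion_equivFun_mul hf hd v) p w
  have key : (aeval (AdjoinRoot.root f)) p * w
      = ((aeval (Algebra.lmul F (AdjoinRoot f) (AdjoinRoot.root f))) p) w := by
    rw [Polynomial.aeval_algHom_apply]
    rfl
  rw [key]
  exact h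

lemma aeval_companion_eq_zero_iff (hf : f.Monic) (hd : 0 < f.natDegree) (p : F[X]) :
    aeval (Matrix.toLin' (companionMatrix f)) p = 0 ↔ f ∣ p := by
  constructor
  · intro h
    have h1 := companion_aeval_apply hf hd p 1
    erw [h, LinearMap.zero_apply] at h1
    have h2 : (aeval (AdjoinRoot.root f) p) = 0 := by
      have := (LinearEquiv.map_eq_zero_iff
        (AdjoinRoot.powerBasis hf.ne_zero).basis.equivFun).mp h1
      simpa using this
    rw [AdjoinRoot.aeval_eq] at h2
    exact AdjoinRoot.mk_eq_zero.mp h2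
  · intro h
    apply LinearMap.ext
    intro w
    have h2 := companion_aeval_apply hf hd p
      ((AdjoinRoot.powerBasis hf.ne_zero).basis.equivFun.symm w)
    erw [AdjoinRoot.aeval_eq, AdjoinRoot.mk_eq_zero.mpr h, zero_mul, map_zero,
      LinearEquiv.apply_symm_apply] at h2
    rw [LinearMap.zero_apply]
    exact h2.symm

lemma companion_pow_sub_one (hf : f.Monic) (hd : 0 < f.natDegree) (m : ℕ) :
    (Matrix.toLin' (companionMatrix f)) ^ m = 1 ↔ f ∣ X ^ m - 1 := by
  rw [← aeval_companion_eq_zero_iff hf hd]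
  rw [map_sub, map_pow, aeval_X, map_one, sub_eq_zero]

lemma exists_rep_of_unit {G : Type*} [Group G] [Fintype G] {x : G}
    (hx : ∀ g : G, g ∈ Subgroup.zpowers x) {M : Type*} [Monoid M]
    (u : Mˣ) (hu : u ^ Fintype.card G = 1) :
    ∃ ρ : G →* M, ρ x = ↑u := by
  have horder : orderOf x = Fintype.card G := by
    rw [orderOf_eq_card_of_forall_mem_zpowers hx, Nat.card_eq_fintype_card]
  set φ : Multiplicative ℤ →* G := (zpowersHom G) x with hφ
  have hsurj : Function.Surjective φ := by
    intro g
    obtain ⟨k, hk⟩ := Subgroup.mem_zpowers_iff.mp (hx g)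
    exact ⟨Multiplicative.ofAdd k, hk⟩
  set ψ : Multiplicative ℤ →* Mˣ := (zpowersHom Mˣ) u with hψ
  have hker : φ.ker ≤ ψ.ker := by
    intro a ha
    rw [MonoidHom.mem_ker] at ha ⊢
    have h1 : x ^ (Multiplicative.toAdd a) = 1 := ha
    have h2 : ((orderOf x : ℤ)) ∣ Multiplicative.toAdd a :=
      orderOf_dvd_iff_zpow_eq_one.mpr h1
    obtain ⟨m, hm⟩ := h2
    show u ^ (Multiplicative.toAdd a) = 1
    rw [hm, zpow_mul]
    have hun : u ^ ((orderOf x : ℤ)) = 1 := by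
      rw [horder, zpow_natCast, hu]
    rw [hun, one_zpow]
  refine ⟨(Units.coeHom M).comp ((QuotientGroup.lift φ.ker ψ hker).comp
    (QuotientGroup.quotientKerEquivOfSurjective φ hsurj).symm.toMonoidHom), ?_⟩
  have hsymm : (QuotientGroup.quotientKerEquivOfSurjective φ hsurj).symm x
      = QuotientGroup.mk (Multiplicative.ofAdd (1 : ℤ)) := by
    rw [MulEquiv.symm_apply_eq]
    have : φ (Multiplicative.ofAdd (1 : ℤ)) = x := by simp [hφ]
    exact this.symm
  simp only [MonoidHom.comp_apply, MulEquiv.coe_toMonoidHom, hsymm]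
  show (↑(ψ (Multiplicative.ofAdd (1 : ℤ))) : M) = ↑u
  simp [hψ]

lemma neZero_cast_of_char {F : Type*} [Field F] {n : ℕ} (hn : 0 < n)
    (hchar : ringChar F = 0 ∨ Nat.Coprime (ringChar F) n)
    (K : Type*) [Field K] [Algebra F K] : NeZero (n : K) := by
  haveI : CharP K (ringChar F) :=
    charP_of_injective_algebraMap (algebraMap F K).injective (ringChar F)
  refine ⟨fun h0 => ?_⟩
  have hdvd : ringChar F ∣ n := (CharP.cast_eq_zero_iff K (ringChar F) n).mp h0
  rcases hchar with h | h
  · rw [h] at hdvd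
    exact absurd (Nat.eq_zero_of_zero_dvd hdvd) (by omega)
  · have h1 : ringChar F = 1 := Nat.eq_one_of_dvd_coprimes h dvd_rfl hdvd
    exact CharP.char_ne_one F (ringChar F) h1

lemma isPrimitiveRoot_root {F : Type*} [Field F] {f : F[X]} {n : ℕ} (hn : 0 < n)
    (hfi : Irreducible f) (hdvd : f ∣ cyclotomic n F)
    (hchar : ringChar F = 0 ∨ Nat.Coprime (ringChar F) n) :
    IsPrimitiveRoot (AdjoinRoot.root f) n := by
  haveI := Fact.mk hfi
  haveI : NeZero (n : AdjoinRoot f) := neZero_cast_of_char hn hchar _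
  rw [← isRoot_cyclotomic_iff]
  have h1 : aeval (AdjoinRoot.root f) (cyclotomic n F) = 0 := by
    rw [AdjoinRoot.aeval_eq, AdjoinRoot.mk_eq_zero.mpr hdvd]
  rw [IsRoot.def, ← map_cyclotomic n (algebraMap F (AdjoinRoot f)), eval_map, ← aeval_def]
  exact h1


lemma companion_conj_eq {f g : F[X]} (hfm : f.Monic) (hfi : Irreducible f)
    (hgm : g.Monic) (hgi : Irreducible g)
    (e : (Fin f.natDegree → F) ≃ₗ[F] (Fin g.natDegree → F))
    (he : ∀ w, e (Matrix.toLin' (companionMatrix f) w)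
      = Matrix.toLin' (companionMatrix g) (e w)) : f = g := by
  have h1 : aeval (Matrix.toLin' (companionMatrix f)) f = 0 :=
    (aeval_companion_eq_zero_iff hfm hfi.natDegree_pos f).mpr dvd_rfl
  have h2 : aeval (Matrix.toLin' (companionMatrix g)) f = 0 := by
    apply LinearMap.ext; intro w
    have h3 := conj_aeval e _ _ he f (e.symm w)
    rw [h1, LinearMap.zero_apply, map_zero, LinearEquiv.apply_symm_apply] at h3
    rw [LinearMap.zero_apply]; exact h3.symm
  have hgf : g ∣ f := (aeval_companion_eq_zero_iff hgm hgi.natDegree_pos f).mp h2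
  exact (eq_of_monic_of_associated hgm hfm (hgi.associated_of_dvd hfi hgf)).symm

lemma part3_aux {F : Type*} [Field F] {G : Type*} [CommGroup G] [Fintype G]
    {n : ℕ} (hn : Fintype.card G = n) {x : G} (hx : ∀ g : G, g ∈ Subgroup.zpowers x)
    (hchar : ringChar F = 0 ∨ Nat.Coprime (ringChar F) n)
    (V : Type*) [AddCommGroup V] [Module F V] (θ : Representation F G V)
    (hirr : IsIrreducibleRep θ) (hinj : Function.Injective θ) :
    ∃ f : F[X], f.Monic ∧ Irreducible f ∧ f ∣ cyclotomic n F ∧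
      ∃ ρ : Representation F G (Fin f.natDegree → F),
        ρ x = Matrix.toLin' (companionMatrix f) ∧ RepEquiv θ ρ := by
  obtain ⟨hnt, hmin⟩ := hirr
  have hn0 : 0 < n := hn ▸ Fintype.card_pos
  have horder : orderOf x = n := by
    rw [orderOf_eq_card_of_forall_mem_zpowers hx, Nat.card_eq_fintype_card, hn]
  have hxpow : ∀ g : G, ∃ k : ℕ, x ^ k = g := fun g =>
    (Submonoid.mem_powers_iff g x).mp (mem_powers_iff_mem_zpowers.mpr (hx g))
  set T : Module.End F V := θ x with hTdef
  have hθpow : ∀ k : ℕ, θ (x ^ k) = T ^ k := fun k => by rw [map_pow]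
  have hTn : T ^ n = 1 := by
    have hxn : x ^ n = 1 := horder ▸ pow_orderOf_eq_one x
    rw [← hθpow, hxn, map_one]
  obtain ⟨v, hv⟩ := exists_ne (0 : V)
  set Φ : F[X] →ₗ[F] V :=
    { toFun := fun p => aeval T p v
      map_add' := fun p q => by simp only [map_add, LinearMap.add_apply]
      map_smul' := fun c p => by
        simp only [map_smul, LinearMap.smul_apply, RingHom.id_apply] } with hΦdef
  have hΦ : ∀ p, Φ p = aeval T p v := fun _ => rfl
  have hΦ_mul : ∀ p q, Φ (p * q) = aeval T p (Φ q) := fun p q => by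
    rw [hΦ, map_mul, Module.End.mul_apply]; rfl
  have hTΦ : ∀ (k : ℕ) (r : F[X]), (T ^ k) (Φ r) = Φ (X ^ k * r) := fun k r => by
    rw [hΦ_mul, map_pow, aeval_X]
  set I : Ideal F[X] :=
    { carrier := {p | Φ p = 0}
      zero_mem' := by simp
      add_mem' := fun {p} {q} hp hq => by
        show Φ (p + q) = 0
        rw [map_add, hp, hq, add_zero]
      smul_mem' := fun r p hp => by
        show Φ (r * p) = 0
        rw [hΦ_mul, hp, map_zero] } with hIdef
  have hImem : ∀ p : F[X], p ∈ I ↔ Φ p = 0 := fun p => Iff.rfl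
  have hXnI : (X ^ n - 1 : F[X]) ∈ I := by
    rw [hImem, hΦ, map_sub, map_pow, aeval_X, map_one, LinearMap.sub_apply,
      hTn, sub_self]
  have hone : (1 : F[X]) ∉ I := by
    rw [hImem, hΦ, map_one]
    exact fun h => hv (by simpa using h)
  -- surjectivity of Φ
  have hsurj : Function.Surjective Φ := by
    have hZ := hmin (LinearMap.range Φ) ?_
    · rcases hZ with hbot | htop
      · exfalso
        have : Φ 1 = 0 := by
          have : Φ 1 ∈ LinearMap.range Φ := ⟨1, rfl⟩
          rwa [hbot, Submodule.mem_bot] at this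
        rw [hΦ, map_one] at this
        exact hv (by simpa using this)
      · intro w
        have : w ∈ LinearMap.range Φ := htop ▸ Submodule.mem_top
        exact this
    · rintro g w ⟨q, hq⟩
      obtain ⟨k, hk⟩ := hxpow g
      refine ⟨X ^ k * q, ?_⟩
      rw [← hTΦ, hq, ← hθpow, hk]
  -- the minimal polynomial f
  obtain ⟨g₀, hg₀⟩ := Submodule.IsPrincipal.principal I
  have hg₀ne : g₀ ≠ 0 := by
    intro h0
    rw [h0] at hg₀
    have : (X ^ n - 1 : F[X]) = 0 := by
      have h2 := hXnI
      rw [hg₀] at h2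
      rwa [Submodule.span_zero_singleton, Submodule.mem_bot] at h2
    have hmon : (X ^ n - 1 : F[X]).Monic := by
      simpa using monic_X_pow_sub_C (1 : F) (by omega)
    exact hmon.ne_zero this
  set f : F[X] := g₀ * C (g₀.leadingCoeff)⁻¹ with hfdef
  have hfm : f.Monic := monic_mul_leadingCoeff_inv hg₀ne
  have hspan : I = Ideal.span {f} := by
    rw [hg₀]
    have hu : IsUnit (C (g₀.leadingCoeff)⁻¹) :=
      Polynomial.isUnit_C.mpr ((inv_ne_zero (leadingCoeff_ne_zero.mpr hg₀ne)).isUnit)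
    exact Ideal.span_singleton_eq_span_singleton.mpr (associated_mul_unit_right g₀ _ hu)
  have hmemI : ∀ p : F[X], p ∈ I ↔ f ∣ p := fun p => by
    rw [hspan, Ideal.mem_span_singleton]
  have hfXn : f ∣ X ^ n - 1 := (hmemI _).mp hXnI
  have hfnu : ¬IsUnit f := by
    intro hu
    exact hone ((hmemI 1).mpr hu.dvd)
  have hf1 : f ≠ 1 := fun h => hfnu (h ▸ isUnit_one)
  have hd : 0 < f.natDegree := by
    rcases Nat.eq_zero_or_pos f.natDegree with h0 | h
    · exfalso
      have := eq_C_of_natDegree_eq_zero h0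
      have hc : f.coeff 0 = 1 := by
        have := hfm
        rw [Monic, Polynomial.leadingCoeff, h0] at this
        exact this
      rw [hc] at this
      simp at this
      exact hf1 this
    · exact h
  -- irreducibility
  have hkey : ∀ a : F[X], a ∣ f → ¬IsUnit a → f ∣ a := by
    intro a haf hnu
    have hZ := hmin (LinearMap.range (Φ ∘ₗ (Algebra.lmul F F[X] a))) ?_
    · rcases hZ with hbot | htop
      · have : Φ (a * 1) = 0 := by
          have hm : Φ (a * 1) ∈ LinearMap.range (Φ ∘ₗ (Algebra.lmul F F[X] a)) := ⟨1, rfl⟩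
          rwa [hbot, Submodule.mem_bot] at hm
        rw [mul_one] at this
        exact (hmemI a).mp this
      · exfalso
        have hvm : v ∈ LinearMap.range (Φ ∘ₗ (Algebra.lmul F F[X] a)) :=
          htop ▸ Submodule.mem_top
        obtain ⟨q, hq⟩ := hvm
        have hq' : Φ (a * q) = v := hq
        have h1q : Φ (1 - a * q) = 0 := by
          rw [map_sub, hq']
          rw [hΦ, map_one]
          simp
        have hdvd1 : f ∣ 1 - a * q := (hmemI _).mp h1q
        have hadvd : a ∣ 1 := by
          have h2 : a ∣ 1 - a * q := haf.trans hdvd1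
          have h3 : a ∣ a * q := dvd_mul_right a q
          simpa using dvd_add h2 h3
        exact hnu (isUnit_of_dvd_one hadvd)
    · rintro g w ⟨q, hq⟩
      obtain ⟨k, hk⟩ := hxpow g
      refine ⟨X ^ k * q, ?_⟩
      have hq' : Φ (a * q) = w := hq
      show Φ (a * (X ^ k * q)) = θ g w
      rw [← hk, hθpow, ← hq', hTΦ]
      ring_nf
  have hfi : Irreducible f := by
    refine ⟨hfnu, fun a b hab => ?_⟩
    by_cases ha : IsUnit a
    · exact Or.inl ha
    · have hdvd : a ∣ f := ⟨b, hab⟩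
      obtain ⟨c, hc⟩ := hkey a hdvd ha
      have hfne : f ≠ 0 := hfm.ne_zero
      have h1 : f * 1 = f * (c * b) := by
        rw [mul_one]
        conv_lhs => rw [hab, hc]
        ring
      have := mul_left_cancel₀ hfne h1
      exact Or.inr (IsUnit.of_mul_eq_one c (by rw [mul_comm]; exact this.symm))
  -- f divides the cyclotomic polynomial
  have hfcyc : f ∣ cyclotomic n F := by
    have hprod : ∏ i ∈ n.divisors, cyclotomic i F = X ^ n - 1 :=
      prod_cyclotomic_eq_X_pow_sub_one hn0 F
    obtain ⟨d, hdmem, hfd⟩ := hfi.prime.exists_mem_finset_dvd (by rw [hprod]; exact hfXn)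
    have hfdX : f ∣ X ^ d - 1 := hfd.trans (cyclotomic.dvd_X_pow_sub_one d F)
    have hTd : T ^ d = 1 := by
      apply LinearMap.ext
      intro w
      obtain ⟨p, hp⟩ := hsurj w
      rw [Module.End.one_apply, ← hp, hTΦ]
      have h1 : (X : F[X]) ^ d * p = ((X ^ d - 1) * p) + p := by ring
      rw [h1, map_add, (hmemI _).mpr (dvd_mul_of_dvd_left hfdX p), zero_add]
    have hxd : x ^ d = 1 := hinj (by rw [hθpow d, hTd, map_one])
    have hnd : n ∣ d := horder ▸ orderOf_dvd_of_pow_eq_one hxd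
    have hdn : d = n := Nat.dvd_antisymm (Nat.mem_divisors.mp hdmem).1 hnd
    rwa [hdn] at hfd
  -- basis T^i v
  have hΦf : Φ f = 0 := (hImem f).mp ((hmemI f).mpr dvd_rfl)
  have hspanV : ⊤ ≤ Submodule.span F (Set.range fun i : Fin f.natDegree => (T ^ (i : ℕ)) v) := by
    intro w _
    obtain ⟨p, hp⟩ := hsurj w
    have hmod : Φ p = Φ (p %ₘ f) := by
      conv_lhs => rw [← modByMonic_add_div p f]
      rw [map_add, (show Φ (f * (p /ₘ f)) = 0 from (hImem _).mp ((hmemI _).mpr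
        (dvd_mul_right f _))), add_zero]
    have hdeg : (p %ₘ f).natDegree < f.natDegree := natDegree_modByMonic_lt p hfm hf1
    rw [← hp, hmod, hΦ, aeval_eq_sum_range' hdeg]
    simp only [LinearMap.sum_apply, LinearMap.smul_apply]
    apply Submodule.sum_mem
    intro i hi
    rw [Finset.mem_range] at hi
    exact Submodule.smul_mem _ _ (Submodule.subset_span ⟨⟨i, hi⟩, rfl⟩)
  have hind : LinearIndependent F (fun i : Fin f.natDegree => (T ^ (i : ℕ)) v) := by
    rw [linearIndependent_iff']
    intro s c hc i hi
    set p : F[X] := ∑ j ∈ s, (Polynomial.monomial (j : ℕ)) (c j) with hpdef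
    have hΦp : Φ p = 0 := by
      rw [hΦ, hpdef, map_sum]
      simp only [LinearMap.sum_apply, aeval_monomial, Module.End.mul_apply,
        Module.algebraMap_end_apply]
      simpa using hc
    have hpI : f ∣ p := (hmemI p).mp ((hImem p).mpr hΦp)
    have hpdeg : p.natDegree < f.natDegree := by
      have : p.natDegree ≤ f.natDegree - 1 := by
        apply Polynomial.natDegree_sum_le_of_forall_le
        intro j _
        exact (Polynomial.natDegree_monomial_le _).trans (by have := j.isLt; omega)
      omega
    have hp0 : p = 0 := by
      by_contra hne
      have := Polynomial.natDegree_le_of_dvd hpI hne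
      omega
    have hcoeff : p.coeff (i : ℕ) = c i := by
      rw [hpdef, Polynomial.finset_sum_coeff, Finset.sum_eq_single i]
      · simp [Polynomial.coeff_monomial]
      · intro j hj hji
        rw [Polynomial.coeff_monomial, if_neg (fun h => hji (Fin.ext h))]
      · intro his; exact absurd hi his
    rw [← hcoeff, hp0, Polynomial.coeff_zero]
  set b : Module.Basis (Fin f.natDegree) F V := Module.Basis.mk hind hspanV with hbdef
  have hb : ∀ i : Fin f.natDegree, b i = (T ^ (i : ℕ)) v := fun i => Module.Basis.mk_apply hind hspanV i
  have hmat : LinearMap.toMatrix b b T = companionMatrix f := by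
    ext i j
    rw [LinearMap.toMatrix_apply, hb j]
    have hTj : T ((T ^ (j : ℕ)) v) = (T ^ ((j : ℕ) + 1)) v := by
      rw [pow_succ']
      rfl
    rw [hTj]
    by_cases hj : (j : ℕ) = f.natDegree - 1
    · have hj1 : (j : ℕ) + 1 = f.natDegree := by have := j.isLt; omega
      rw [hj1]
      have hdeg' : ((X : F[X]) ^ f.natDegree - f).natDegree < f.natDegree := by
        by_cases hz : (X : F[X]) ^ f.natDegree - f = 0
        · rw [hz]; simpa using hd
        · rw [Polynomial.natDegree_lt_iff_degree_lt hz]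
          have hdd := Polynomial.degree_sub_lt (p := (X : F[X]) ^ f.natDegree) (q := f) ?_
            (pow_ne_zero _ Polynomial.X_ne_zero) ?_
          · calc ((X : F[X]) ^ f.natDegree - f).degree < ((X : F[X]) ^ f.natDegree).degree := hdd
              _ = (f.natDegree : WithBot ℕ) := Polynomial.degree_X_pow _
          · rw [Polynomial.degree_X_pow, Polynomial.degree_eq_natDegree hfm.ne_zero]
          · simp [hfm.leadingCoeff, Polynomial.monic_X_pow]
      have hTd' : (T ^ f.natDegree) v = ∑ k : Fin f.natDegree, (-(f.coeff (k : ℕ))) • b k := by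
        have h1 : (T ^ f.natDegree) v = Φ (X ^ f.natDegree) := by
          rw [hΦ, map_pow, aeval_X]
        have h2 : Φ ((X : F[X]) ^ f.natDegree) = Φ (X ^ f.natDegree - f) := by
          rw [map_sub, hΦf, sub_zero]
        rw [h1, h2, hΦ, aeval_eq_sum_range' hdeg']
        simp only [LinearMap.sum_apply, LinearMap.smul_apply]
        rw [← Fin.sum_univ_eq_sum_range
          (fun k => ((X : F[X]) ^ f.natDegree - f).coeff k • (T ^ k) v) f.natDegree]
        refine Finset.sum_congr rfl fun k _ => ?_
        rw [hb k]
        congr 1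
        rw [Polynomial.coeff_sub, Polynomial.coeff_X_pow, if_neg k.isLt.ne, zero_sub]
      rw [hTd']
      rw [congrFun (b.repr_sum_self (fun k : Fin f.natDegree => -(f.coeff (k : ℕ)))) i]
      simp [companionMatrix, hj]
    · have hlt : (j : ℕ) + 1 < f.natDegree := by have := j.isLt; omega
      have hbj1 : (T ^ ((j : ℕ) + 1)) v = b ⟨(j : ℕ) + 1, hlt⟩ := (hb ⟨(j : ℕ) + 1, hlt⟩).symm
      rw [hbj1, Module.Basis.repr_self, Finsupp.single_apply]
      simp only [companionMatrix, Matrix.of_apply, if_neg hj]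
      by_cases h : (i : ℕ) = (j : ℕ) + 1
      · rw [if_pos h, if_pos (Fin.ext h.symm)]
      · rw [if_neg h, if_neg (fun hc2 => h (congrArg Fin.val hc2).symm)]
  -- assemble
  set e := b.equivFun with hedef
  refine ⟨f, hfm, hfi, hfcyc, ?_⟩
  set ρ : Representation F G (Fin f.natDegree → F) :=
    { toFun := fun g => e.toLinearMap ∘ₗ (θ g) ∘ₗ e.symm.toLinearMap
      map_one' := by
        apply LinearMap.ext
        intro w
        simp [map_one]
      map_mul' := by
        intro g₁ g₂
        apply LinearMap.ext
        intro w
        simp [map_mul, Module.End.mul_apply] } with hρdef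
  have hρapp : ∀ (g : G) (w : Fin f.natDegree → F), ρ g w = e (θ g (e.symm w)) := fun _ _ => rfl
  refine ⟨ρ, ?_, ⟨e, fun g w => ?_⟩⟩
  · apply LinearMap.ext
    intro w
    rw [hρapp]
    conv_rhs => rw [show w = e (e.symm w) from (e.apply_symm_apply w).symm]
    rw [Matrix.toLin'_apply, ← hmat]
    rw [Module.Basis.equivFun_apply, Module.Basis.equivFun_apply, LinearMap.toMatrix_mulVec_repr]
  · rw [hρapp, LinearEquiv.symm_apply_apply]

end Aux

/-- Let `G = ⟨x⟩` be cyclic of order `n` and `F` a field of characteristic `0`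
or prime to `n`.  The isomorphism classes of faithful irreducible `F`-representations of
`G` are in bijective correspondence with the monic irreducible factors of the `n`-th
cyclotomic polynomial `Φ_n` over `F`: the representation corresponding to such a factor `f`
is given by `x ↦ C_f` (the companion matrix of `f`), and these are, up to equivalence,
exactly the faithful irreducible `F`-representations of `G`. -/
theorem stmt5 {F G : Type*} [Field F] [CommGroup G] [Fintype G]
    (n : ℕ) (hn : Fintype.card G = n)
    (x : G) (hx : ∀ g : G, g ∈ Subgroup.zpowers x)
    (hchar : ringChar F = 0 ∨ Nat.Coprime (ringChar F) n) :
    (∀ f : F[X], f.Monic → Irreducible f → f ∣ cyclotomic n F →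
      ∃ ρ : Representation F G (Fin f.natDegree → F),
        ρ x = Matrix.toLin' (companionMatrix f) ∧
        IsIrreducibleRep ρ ∧ Function.Injective ρ) ∧
    (∀ f g : F[X], f.Monic → Irreducible f → f ∣ cyclotomic n F →
      g.Monic → Irreducible g → g ∣ cyclotomic n F → f ≠ g →
      ∀ (ρ : Representation F G (Fin f.natDegree → F))
        (σ : Representation F G (Fin g.natDegree → F)),
        ρ x = Matrix.toLin' (companionMatrix f) → σ x = Matrix.toLin' (companionMatrix g) →
        ¬ RepEquiv ρ σ) ∧
    (∀ (V : Type*) [AddCommGroup V] [Module F V] (θ : Representation F G V),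
      IsIrreducibleRep θ → Function.Injective θ →
      ∃! f : {f : F[X] // f.Monic ∧ Irreducible f ∧ f ∣ cyclotomic n F},
        ∃ ρ : Representation F G (Fin (f : F[X]).natDegree → F),
          ρ x = Matrix.toLin' (companionMatrix (f : F[X])) ∧ RepEquiv θ ρ) := by
  have hn0 : 0 < n := hn ▸ Fintype.card_pos
  have horder : orderOf x = n := by
    rw [orderOf_eq_card_of_forall_mem_zpowers hx, Nat.card_eq_fintype_card, hn]
  have hxpow : ∀ g : G, ∃ k : ℕ, x ^ k = g := fun g =>
    (Submonoid.mem_powers_iff g x).mp (mem_powers_iff_mem_zpowers.mpr (hx g))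
  refine ⟨?_, ?_, ?_⟩
  · -- Part 1
    intro f hfm hfi hfd
    have hd : 0 < f.natDegree := hfi.natDegree_pos
    haveI := Fact.mk hfi
    have hfx : f ∣ X ^ n - 1 := hfd.trans (cyclotomic.dvd_X_pow_sub_one n F)
    set T : Module.End F (Fin f.natDegree → F) := Matrix.toLin' (companionMatrix f) with hTdef
    have hTn : T ^ n = 1 := (companion_pow_sub_one hfm hd n).mpr hfx
    have hinvl : T * T ^ (n - 1) = 1 := by
      rw [← pow_succ']
      rw [show n - 1 + 1 = n by omega, hTn]
    have hinvr : T ^ (n - 1) * T = 1 := by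
      rw [← pow_succ]
      rw [show n - 1 + 1 = n by omega, hTn]
    set u : (Module.End F (Fin f.natDegree → F))ˣ := ⟨T, T ^ (n - 1), hinvl, hinvr⟩ with hudef
    have hun : u ^ Fintype.card G = 1 := by
      apply Units.ext
      show T ^ Fintype.card G = 1
      rw [hn, hTn]
    obtain ⟨ρ, hρx⟩ := exists_rep_of_unit hx u hun
    refine ⟨ρ, hρx, ⟨?_, ?_⟩, ?_⟩
    · -- Nontrivial
      haveI : Nonempty (Fin f.natDegree) := ⟨⟨0, hd⟩⟩
      exact Function.nontrivial
    · -- no invariant subspaces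
      intro W hW
      set e := (AdjoinRoot.powerBasis hfm.ne_zero).basis.equivFun with hedef
      have hWT : ∀ w, w ∈ W → T w ∈ W := by
        intro w hw
        have := hW x w hw
        rwa [hρx] at this
      have hstep : ∀ a : AdjoinRoot f, e a ∈ W → e (AdjoinRoot.root f * a) ∈ W := by
        intro a ha
        rw [companion_equivFun_mul hfm hd]
        exact hWT _ ha
      have hmul : ∀ (p : F[X]) (a : AdjoinRoot f), e a ∈ W →
          e (aeval (AdjoinRoot.root f) p * a) ∈ W := by
        intro p
        induction p using Polynomial.induction_on' with
        | add p q hp hq =>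
          intro a ha
          rw [map_add, add_mul, map_add]
          exact W.add_mem (hp a ha) (hq a ha)
        | monomial k c =>
          intro a ha
          have hpow : ∀ m : ℕ, e (AdjoinRoot.root f ^ m * a) ∈ W := by
            intro m
            induction m with
            | zero => simpa using ha
            | succ m ih =>
              rw [pow_succ', mul_assoc]
              exact hstep _ ih
          rw [aeval_monomial]
          have hsm : algebraMap F (AdjoinRoot f) c * AdjoinRoot.root f ^ k * a
              = c • (AdjoinRoot.root f ^ k * a) := by
            rw [mul_assoc, Algebra.smul_def]
          rw [hsm, map_smul]
          exact W.smul_mem c (hpow k)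
      set W' : Ideal (AdjoinRoot f) :=
        { carrier := {a | e a ∈ W}
          zero_mem' := by simp; exact W.zero_mem
          add_mem' := fun {a} {b} ha hb => by
            show e (a + b) ∈ W
            rw [map_add]
            exact W.add_mem ha hb
          smul_mem' := fun r a ha => by
            show e (r • a) ∈ W
            obtain ⟨p, hp⟩ := AdjoinRoot.mk_surjective r
            rw [smul_eq_mul, ← hp, ← AdjoinRoot.aeval_eq]
            exact hmul p a ha } with hW'def
      rcases W'.eq_bot_or_top with hbot | htop
      · left
        rw [eq_bot_iff]
        intro w hw
        have hmem : e.symm w ∈ W' := by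
          show e (e.symm w) ∈ W
          erw [LinearEquiv.apply_symm_apply]; assumption
        rw [hbot, Ideal.mem_bot] at hmem
        have : w = 0 := by
          rw [← e.apply_symm_apply w, hmem, map_zero]; rfl
        simp [this]
      · right
        rw [eq_top_iff]
        intro w _
        have hmem : e.symm w ∈ W' := htop ▸ Submodule.mem_top
        have : e (e.symm w) ∈ W := hmem
        erw [LinearEquiv.apply_symm_apply] at this; exact this
    · -- injectivity
      have hprim : IsPrimitiveRoot (AdjoinRoot.root f) n :=
        isPrimitiveRoot_root hn0 hfi hfd hchar
      have hker : ∀ g : G, ρ g = 1 → g = 1 := by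
        intro g hg
        obtain ⟨k, hk⟩ := hxpow g
        have hTk : T ^ k = 1 := by
          have h4 : ρ (x ^ k) = 1 := by rw [hk, hg]
          rw [map_pow, hρx] at h4
          exact h4
        have hfk : f ∣ X ^ k - 1 := (companion_pow_sub_one hfm hd k).mp hTk
        have hroot : AdjoinRoot.root f ^ k = 1 := by
          have h5 := AdjoinRoot.mk_eq_zero.mpr hfk
          rw [← AdjoinRoot.aeval_eq] at h5
          simpa [map_sub, map_pow, sub_eq_zero] using h5
        have hnk : n ∣ k := (hprim.pow_eq_one_iff_dvd k).mp hroot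
        rw [← hk]
        exact orderOf_dvd_iff_pow_eq_one.mp (horder ▸ hnk)
      intro g₁ g₂ h12
      have h1 : ρ (g₁ * g₂⁻¹) = 1 := by
        rw [map_mul, h12, ← map_mul, mul_inv_cancel, map_one]
      have := hker _ h1
      rwa [mul_inv_eq_one] at this
  · -- Part 2
    intro f g hfm hfi hfd hgm hgi hgd hne ρ σ hρ hσ hequiv
    obtain ⟨e, he⟩ := hequiv
    exact hne (companion_conj_eq hfm hfi hgm hgi e (fun w => by
      rw [← hρ, ← hσ]; exact he x w))
  · -- Part 3
    intro V _ _ θ hirr hinj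
    obtain ⟨f, hfm, hfi, hfcyc, ρ, hρx, hequiv⟩ := part3_aux hn hx hchar V θ hirr hinj
    refine ⟨⟨f, hfm, hfi, hfcyc⟩, ⟨ρ, hρx, hequiv⟩, ?_⟩
    rintro ⟨g, hgm, hgi, hgcyc⟩ ⟨σ, hσx, hσe⟩
    apply Subtype.ext
    show g = f
    obtain ⟨e1, he1⟩ := hσe
    obtain ⟨e2, he2⟩ := hequiv
    refine companion_conj_eq hgm hgi hfm hfi (e1.symm.trans e2) ?_
    intro w
    simp only [LinearEquiv.trans_apply]
    have h1 : σ x (e1 (e1.symm w)) = e1 (θ x (e1.symm w)) := (he1 x (e1.symm w)).symm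
    rw [LinearEquiv.apply_symm_apply] at h1
    rw [← hσx, ← hρx, h1, LinearEquiv.symm_apply_apply]
    exact he2 x (e1.symm w)
end

section
/- Let G be a finite abelian group, F a field of characteristic 0 or prime to |G|, and K a subgroup of G such that G/K is cyclic of order n generated by xK for some x ∈ G. If e = Σ_{i=0}^{n−1} α_i (xK)^i (with α_i ∈ F) is a primitive central idempotent of F[G/K] corresponding to a faithful irreducible F-representation of G/K, then e_K · Σ_{i=0}^{n−1} α_i x^i is a primitive central idempotent of F[G], where e_K = (1/|K|) Σ_{k∈K} k. Moreover, every primitive central idempotent of F[G] arises in this way from some such K and e. -/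
/-- A primitive central idempotent of a ring: a nonzero central idempotent which cannot be
written as the sum of two nonzero orthogonal central idempotents. -/
def IsPrimitiveCentralIdempotent {R : Type*} [Ring R] (e : R) : Prop :=
  IsIdempotentElem e ∧ e ∈ Set.center R ∧ e ≠ 0 ∧
    ∀ f g : R, IsIdempotentElem f → IsIdempotentElem g → f ∈ Set.center R →
      g ∈ Set.center R → f * g = 0 → e = f + g → f = 0 ∨ g = 0

open scoped Classical

set_option maxHeartbeats 1000000

open MonoidAlgebra Finset

noncomputable def mapCoeffRingHom {R S : Type*} [CommSemiring R] [CommSemiring S]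
    {G : Type*} [CommMonoid G] (σ : R →+* S) :
    MonoidAlgebra R G →+* MonoidAlgebra S G :=
  MonoidAlgebra.liftNCRingHom (MonoidAlgebra.singleOneRingHom.comp σ)
    (MonoidAlgebra.of S G) (fun _ _ => Commute.all _ _)

lemma mapCoeffRingHom_single {R S : Type*} [CommSemiring R] [CommSemiring S]
    {G : Type*} [CommMonoid G] (σ : R →+* S) (a : G) (b : R) :
    mapCoeffRingHom (G := G) σ (MonoidAlgebra.single a b) = MonoidAlgebra.single a (σ b) := by
  simp only [mapCoeffRingHom, liftNCRingHom, RingHom.coe_mk, MonoidHom.coe_mk, OneHom.coe_mk]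
  show MonoidAlgebra.liftNC _ _ _ = _
  rw [MonoidAlgebra.liftNC_single]
  simp [MonoidAlgebra.singleOneRingHom, MonoidAlgebra.of_apply, MonoidAlgebra.single_mul_single]

noncomputable def mapCoeffRingEquiv {R S : Type*} [CommSemiring R] [CommSemiring S]
    {G : Type*} [CommMonoid G] (σ : R ≃+* S) :
    MonoidAlgebra R G ≃+* MonoidAlgebra S G :=
  RingEquiv.ofRingHom (mapCoeffRingHom (G := G) σ.toRingHom)
    (mapCoeffRingHom (G := G) σ.symm.toRingHom)
    (by
      apply MonoidAlgebra.ringHom_ext <;> intro a <;>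
        simp [mapCoeffRingHom_single])
    (by
      apply MonoidAlgebra.ringHom_ext <;> intro a <;>
        simp [mapCoeffRingHom_single])

universe u v

lemma monoidAlgebra_isSemisimple {F : Type u} [Field F] {G : Type v} [CommGroup G] [Fintype G]
    (h : (Fintype.card G : F) ≠ 0) : IsSemisimpleRing (MonoidAlgebra F G) := by
  haveI : NeZero ((Fintype.card (ULift.{u} G) : ULift.{v} F)) := by
    constructor
    rw [Fintype.card_ulift]
    intro hc
    apply h
    have := congrArg (ULift.ringEquiv (R := F)) hc
    rwa [map_natCast, map_zero] at this
  haveI : NeZero ((Nat.card (ULift.{u} G) : ULift.{v} F)) := by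
    rw [Nat.card_eq_fintype_card]; infer_instance
  set_option synthInstance.maxHeartbeats 800000 in
  haveI : IsSemisimpleRing (MonoidAlgebra (ULift.{v} F) (ULift.{u} G)) := inferInstance
  have e1 : MonoidAlgebra (ULift.{v} F) (ULift.{u} G) ≃+* MonoidAlgebra (ULift.{v} F) G :=
    (MonoidAlgebra.domCongr (ULift.{v} F) (ULift.{v} F) (MulEquiv.ulift (α := G))).toRingEquiv
  have e2 : MonoidAlgebra (ULift.{v} F) G ≃+* MonoidAlgebra F G :=
    mapCoeffRingEquiv ULift.ringEquiv
  exact (e1.trans e2).isSemisimpleRing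

lemma isDomain_of_semisimple {R : Type*} [CommRing R] [Nontrivial R] [IsSemisimpleRing R]
    (h : ∀ f : R, f * f = f → f = 0 ∨ f = 1) : IsDomain R := by
  have : NoZeroDivisors R := by
    constructor
    intro a b hab
    by_cases ha : a = 0
    · exact Or.inl ha
    right
    set I : Submodule R R :=
      { carrier := {x | a * x = 0}
        add_mem' := fun hx hy => by simp only [Set.mem_setOf_eq] at *; rw [mul_add, hx, hy, add_zero]
        zero_mem' := by simp
        smul_mem' := fun c x hx => by
          simp only [Set.mem_setOf_eq, smul_eq_mul] at *
          rw [mul_comm c x, ← mul_assoc, hx, zero_mul] } with hI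
    obtain ⟨J, hIJ⟩ := exists_isCompl I
    have h1 : (1 : R) ∈ I ⊔ J := by rw [hIJ.sup_eq_top]; trivial
    obtain ⟨f, hfI, g, hgJ, hfg⟩ := Submodule.mem_sup.1 h1
    have hfI' : a * f = 0 := hfI
    have hfg0 : f * g = 0 := by
      have hm : f * g ∈ I ⊓ J := by
        constructor
        · show a * (f * g) = 0
          rw [← mul_assoc, hfI', zero_mul]
        · exact J.smul_mem f hgJ
      rw [hIJ.inf_eq_bot] at hm
      exact hm
    have hff : f * f = f := by
      have : f * (f + g) = f * 1 := by rw [hfg]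
      rw [mul_add, hfg0, add_zero, mul_one] at this
      exact this
    rcases h f hff with hf0 | hf1
    · have hg1 : g = 1 := by rw [hf0, zero_add] at hfg; exact hfg
      have hbJ : b ∈ J := by
        have := J.smul_mem b hgJ
        rwa [hg1, smul_eq_mul, mul_one] at this
      have hbI : b ∈ I := hab
      have : b ∈ I ⊓ J := ⟨hbI, hbJ⟩
      rw [hIJ.inf_eq_bot] at this
      exact this
    · exfalso
      apply ha
      rw [hf1, mul_one] at hfI'
      exact hfI'
  exact NoZeroDivisors.to_isDomain R

open MonoidAlgebra Finset
open scoped Classical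

section Transfer

variable {F : Type*} [Field F] {G : Type*} [CommGroup G] [Fintype G] (K : Subgroup G)

noncomputable def eIdem : MonoidAlgebra F G :=
  (Nat.card K : F)⁻¹ • ∑ k : K, MonoidAlgebra.of F G (k : G)

noncomputable def projK : MonoidAlgebra F G →+* MonoidAlgebra F (G ⧸ K) :=
  MonoidAlgebra.mapDomainRingHom F (QuotientGroup.mk' K)

omit [Fintype G] in
lemma projK_single (g : G) (c : F) :
    projK K (MonoidAlgebra.single g c) = MonoidAlgebra.single (↑g : G ⧸ K) c := by
  simp [projK, MonoidAlgebra.mapDomainRingHom]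

omit [Fintype G] in
lemma projK_of (g : G) :
    projK (F := F) K (MonoidAlgebra.of F G g) = MonoidAlgebra.of F (G ⧸ K) (↑g : G ⧸ K) :=
  projK_single K g 1

omit [Fintype G] in
lemma projK_smul (c : F) (x : MonoidAlgebra F G) :
    projK K (c • x) = c • projK K x :=
  MonoidAlgebra.mapDomain_smul _ c x

variable (hK : (Nat.card K : F) ≠ 0)

lemma eIdem_mul_of {k : G} (hk : k ∈ K) :
    (eIdem K : MonoidAlgebra F G) * MonoidAlgebra.of F G k = eIdem K := by
  rw [eIdem, smul_mul_assoc, Finset.sum_mul]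
  congr 1
  refine Fintype.sum_equiv (Equiv.mulRight (⟨k, hk⟩ : K))
    (fun k' => MonoidAlgebra.of F G (k' : G) * MonoidAlgebra.of F G k)
    (fun k' => MonoidAlgebra.of F G (k' : G)) (fun k' => ?_)
  beta_reduce
  rw [← map_mul]
  rfl

include hK

lemma eIdem_idem : (eIdem K : MonoidAlgebra F G) * eIdem K = eIdem K := by
  nth_rewrite 2 [eIdem]
  rw [mul_smul_comm, Finset.mul_sum]
  rw [Finset.sum_congr rfl (fun (k : K) _ => eIdem_mul_of K k.2), Finset.sum_const,
    Finset.card_univ, ← Nat.card_eq_fintype_card, ← Nat.cast_smul_eq_nsmul F, smul_smul,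
    inv_mul_cancel₀ hK, one_smul]

lemma projK_eIdem : projK K (eIdem (F := F) K) = 1 := by
  rw [eIdem, projK_smul, map_sum]
  have : ∀ k : K, projK (F := F) K (MonoidAlgebra.of F G (k : G)) = 1 := by
    intro k
    rw [projK_of]
    have : ((k : G) : G ⧸ K) = 1 := (QuotientGroup.eq_one_iff _).2 k.2
    rw [this, map_one]
  rw [Finset.sum_congr rfl (fun k _ => this k), Finset.sum_const, Finset.card_univ,
    ← Nat.card_eq_fintype_card, ← Nat.cast_smul_eq_nsmul F, smul_smul,
    inv_mul_cancel₀ hK, one_smul]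

lemma coeff_eq {x : MonoidAlgebra F G} (hx : x * eIdem K = x) (g : G) :
    (Nat.card K : F) * x.coeff g = (projK K x).coeff ↑g := by
  have hconst : ∀ k ∈ K, ∀ a : G, x.coeff (a * k⁻¹) = x.coeff a := by
    intro k hk a
    have h1 : x * MonoidAlgebra.of F G k = x := by
      conv_lhs => rw [← hx, mul_assoc, eIdem_mul_of K hk]
      exact hx
    have := congrArg (fun z : MonoidAlgebra F G => z.coeff a) h1
    simpa [MonoidAlgebra.of_apply, MonoidAlgebra.coeff_mul_single_apply] using this
  have happ : (projK K x).coeff ↑g = ∑ a : G, if (↑a : G ⧸ K) = ↑g then x.coeff a else 0 := by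
    show (Finsupp.mapDomain (QuotientGroup.mk' K) x.coeff) ↑g = _
    rw [Finsupp.mapDomain, Finsupp.sum_apply, Finsupp.sum,
      Finset.sum_subset (Finset.subset_univ x.coeff.support)
        (fun a _ ha => by simp [Finsupp.notMem_support_iff.1 ha])]
    refine Finset.sum_congr rfl (fun a _ => ?_)
    simp [Finsupp.single_apply]
  rw [happ, ← Finset.sum_filter]
  have hval : ∀ a ∈ Finset.univ.filter (fun a : G => (↑a : G ⧸ K) = ↑g), x.coeff a = x.coeff g := by
    intro a ha
    rw [Finset.mem_filter] at ha
    have hk : g⁻¹ * a ∈ K := by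
      have := ha.2
      rw [eq_comm, QuotientGroup.eq] at this
      exact this
    have := hconst _ hk a
    simpa [mul_inv_rev, mul_assoc] using this.symm
  rw [Finset.sum_congr rfl hval, Finset.sum_const, nsmul_eq_mul]
  congr 1
  rw [Nat.card_eq_fintype_card (α := K)]
  have e : (K : Type _) ≃ {a : G // a ∈ Finset.univ.filter (fun a : G => (↑a : G ⧸ K) = ↑g)} :=
    { toFun := fun k => ⟨g * k.1, Finset.mem_filter.2 ⟨Finset.mem_univ _, by
        rw [eq_comm, QuotientGroup.eq]; simpa using k.2⟩⟩
      invFun := fun a => ⟨g⁻¹ * a.1, by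
        have := (Finset.mem_filter.1 a.2).2
        rw [eq_comm, QuotientGroup.eq] at this
        exact this⟩
      left_inv := fun k => by ext; simp
      right_inv := fun a => by ext; simp }
  have hc : Fintype.card K = (Finset.univ.filter (fun a : G => (↑a : G ⧸ K) = ↑g)).card := by
    rw [← Fintype.card_coe (Finset.univ.filter (fun a : G => (↑a : G ⧸ K) = ↑g))]
    exact Fintype.card_congr e
  exact_mod_cast congrArg (Nat.cast : ℕ → F) hc

lemma projK_injOn {x y : MonoidAlgebra F G} (hx : x * eIdem K = x) (hy : y * eIdem K = y)
    (h : projK K x = projK K y) : x = y := by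
  ext g
  have h1 := coeff_eq K hK hx g
  have h2 := coeff_eq K hK hy g
  rw [h] at h1
  have := h1.trans h2.symm
  exact mul_left_cancel₀ hK this



omit [Fintype G] hK in
lemma central_all (z : MonoidAlgebra F G) : z ∈ Set.center (MonoidAlgebra F G) := by
  rw [Set.center_eq_univ]; trivial

omit [Fintype G] hK in
lemma centralQ_all (z : MonoidAlgebra F (G ⧸ K)) : z ∈ Set.center (MonoidAlgebra F (G ⧸ K)) := by
  rw [Set.center_eq_univ]; trivial

lemma transfer {E : MonoidAlgebra F G} (hE : E * eIdem K = E) :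
    IsPrimitiveCentralIdempotent (projK K E) ↔ IsPrimitiveCentralIdempotent E := by
  constructor
  · rintro ⟨hidem, -, hne, hprim⟩
    refine ⟨?_, central_all E, ?_, ?_⟩
    · -- idempotent
      refine projK_injOn K hK ?_ hE ?_
      · rw [mul_assoc, hE]
      · rw [map_mul]; exact hidem.eq
    · rintro rfl; exact hne (map_zero _)
    · intro f g hf hg _ _ hfg hEfg
      have hfE : f * E = f := by rw [hEfg, mul_add, hf, hfg, add_zero]
      have hfe : f * eIdem K = f := by
        conv_lhs => rw [← hfE, mul_assoc, hE]
        exact hfE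
      have hgE : g * E = g := by
        rw [hEfg, mul_add, mul_comm g f, hfg, hg, zero_add]
      have hge : g * eIdem K = g := by
        conv_lhs => rw [← hgE, mul_assoc, hE]
        exact hgE
      rcases hprim (projK K f) (projK K g)
        (hf.map (projK K))
        (hg.map (projK K))
        (centralQ_all (F := F) K _) (centralQ_all (F := F) K _)
        (by rw [← map_mul, hfg, map_zero])
        (by rw [← map_add]; exact congrArg _ hEfg) with h0 | h0
      · exact Or.inl (projK_injOn K hK hfe (by rw [zero_mul]) (by rw [h0, map_zero]))
      · exact Or.inr (projK_injOn K hK hge (by rw [zero_mul]) (by rw [h0, map_zero]))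
  · rintro ⟨hidem, -, hne, hprim⟩
    refine ⟨?_, centralQ_all K _, ?_, ?_⟩
    · exact hidem.map (projK K)
    · intro h0
      exact hne (projK_injOn K hK hE (by rw [zero_mul]) (by rw [h0, map_zero]))
    · intro f' g' hf' hg' _ _ hfg' hEfg'
      set u : MonoidAlgebra F G := MonoidAlgebra.mapDomain Quotient.out f' with hu
      have hπu : projK K u = f' := by
        rw [hu, projK]
        show MonoidAlgebra.mapDomain (QuotientGroup.mk' K) (MonoidAlgebra.mapDomain Quotient.out f') = f'
        apply MonoidAlgebra.coeff_injective
        show Finsupp.mapDomain (QuotientGroup.mk' K) (Finsupp.mapDomain Quotient.out f'.coeff) = f'.coeff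
        rw [← Finsupp.mapDomain_comp]
        have : (QuotientGroup.mk' K) ∘ (Quotient.out : G ⧸ K → G) = id := by
          funext q
          exact QuotientGroup.out_eq' q
        rw [this, Finsupp.mapDomain_id]
      set f : MonoidAlgebra F G := u * E * eIdem K with hf
      set g : MonoidAlgebra F G := E - f with hg
      have hπE : projK K E = f' + g' := hEfg'
      have hfe : f * eIdem K = f := by
        rw [hf, mul_assoc, eIdem_idem K hK]
      have hπf : projK K f = f' := by
        rw [hf, map_mul, map_mul, hπu, projK_eIdem K hK, mul_one, hπE, mul_add, hf', hfg',
          add_zero]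
      have hge : g * eIdem K = g := by rw [hg, sub_mul, hE, hfe]
      have hπg : projK K g = g' := by rw [hg, map_sub, hπf, hπE, add_sub_cancel_left]
      have hfidem : f * f = f :=
        projK_injOn K hK (by rw [mul_assoc, hfe]) hfe (by rw [map_mul, hπf]; exact hf'.eq)
      have hgidem : g * g = g :=
        projK_injOn K hK (by rw [mul_assoc, hge]) hge (by rw [map_mul, hπg]; exact hg'.eq)
      have hfg0 : f * g = 0 :=
        projK_injOn K hK (by rw [mul_assoc, hge]) (by rw [zero_mul])
          (by rw [map_mul, hπf, hπg, hfg', map_zero])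
      have hsum : E = f + g := by rw [hg]; ring
      rcases hprim f g hfidem hgidem (central_all f) (central_all g) hfg0 hsum with h0 | h0
      · exact Or.inl (by rw [← hπf, h0, map_zero])
      · exact Or.inr (by rw [← hπg, h0, map_zero])


lemma projK_sum (x : G) (n : ℕ) (α : ℕ → F) :
    projK K (∑ i ∈ Finset.range n, α i • MonoidAlgebra.of F G (x ^ i)) =
      ∑ i ∈ Finset.range n, α i • MonoidAlgebra.of F (G ⧸ K) ((↑x : G ⧸ K) ^ i) := by
  rw [map_sum]
  refine Finset.sum_congr rfl (fun i _ => ?_)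
  rw [projK_smul, projK_of]
  congr 1

end Transfer

section Main

variable {F : Type*} [Field F] {G : Type*} [CommGroup G] [Fintype G]

lemma card_ne_zero' (hchar : ringChar F = 0 ∨ Nat.Coprime (ringChar F) (Fintype.card G))
    {m : ℕ} (hm : 0 < m) (hdvd : m ∣ Fintype.card G) : (m : F) ≠ 0 := by
  intro h0
  haveI : CharP F (ringChar F) := ringChar.charP F
  rw [CharP.cast_eq_zero_iff F (ringChar F) m] at h0
  rcases hchar with h | h
  · rw [h] at h0
    have := Nat.eq_zero_of_zero_dvd h0
    omega
  · exact CharP.ringChar_ne_one (h.eq_one_of_dvd (h0.trans hdvd))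

lemma card_subgroup_ne_zero (hchar : ringChar F = 0 ∨ Nat.Coprime (ringChar F) (Fintype.card G))
    (K : Subgroup G) : ((Nat.card K : ℕ) : F) ≠ 0 := by
  refine card_ne_zero' hchar Nat.card_pos ?_
  rw [← Nat.card_eq_fintype_card (α := G)]
  exact Subgroup.card_subgroup_dvd_card K

end Main


/-- Let `G` be a finite abelian group, `F` a field of characteristic `0` or
prime to `|G|`, and `K ≤ G` with `G/K` cyclic of order `n` generated by `xK`.  If
`e = ∑_{i<n} α_i (xK)^i` is a primitive central idempotent of `F[G/K]` corresponding to a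
faithful irreducible `F`-representation of `G/K` (faithfulness of the corresponding
representation on `F[G/K]e` being expressed by: `qK·e = e` implies `qK = 1`), then
`e_K · ∑_{i<n} α_i x^i` is a primitive central idempotent of `F[G]`, where
`e_K = (1/|K|) ∑_{k∈K} k`.  Moreover every primitive central idempotent of `F[G]` arises in
this way. -/
theorem stmt12 {F G : Type*} [Field F] [CommGroup G] [Fintype G]
    (hchar : ringChar F = 0 ∨ Nat.Coprime (ringChar F) (Fintype.card G)) :
    (∀ (K : Subgroup G) (x : G) (n : ℕ) (α : ℕ → F),
      Nat.card (G ⧸ K) = n →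
      (∀ g : G ⧸ K, g ∈ Subgroup.zpowers (QuotientGroup.mk x : G ⧸ K)) →
      IsPrimitiveCentralIdempotent
        (∑ i ∈ Finset.range n,
          α i • MonoidAlgebra.of F (G ⧸ K) ((QuotientGroup.mk x : G ⧸ K) ^ i)) →
      (∀ q : G ⧸ K,
        MonoidAlgebra.of F (G ⧸ K) q *
            (∑ i ∈ Finset.range n,
              α i • MonoidAlgebra.of F (G ⧸ K) ((QuotientGroup.mk x : G ⧸ K) ^ i))
          = (∑ i ∈ Finset.range n,
              α i • MonoidAlgebra.of F (G ⧸ K) ((QuotientGroup.mk x : G ⧸ K) ^ i)) →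
        q = 1) →
      IsPrimitiveCentralIdempotent
        (((Nat.card K : F)⁻¹ • ∑ k : K, MonoidAlgebra.of F G (k : G)) *
          ∑ i ∈ Finset.range n, α i • MonoidAlgebra.of F G (x ^ i))) ∧
    (∀ E : MonoidAlgebra F G, IsPrimitiveCentralIdempotent E →
      ∃ (K : Subgroup G) (x : G) (n : ℕ) (α : ℕ → F),
        Nat.card (G ⧸ K) = n ∧
        (∀ g : G ⧸ K, g ∈ Subgroup.zpowers (QuotientGroup.mk x : G ⧸ K)) ∧
        IsPrimitiveCentralIdempotent
          (∑ i ∈ Finset.range n,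
            α i • MonoidAlgebra.of F (G ⧸ K) ((QuotientGroup.mk x : G ⧸ K) ^ i)) ∧
        (∀ q : G ⧸ K,
          MonoidAlgebra.of F (G ⧸ K) q *
              (∑ i ∈ Finset.range n,
                α i • MonoidAlgebra.of F (G ⧸ K) ((QuotientGroup.mk x : G ⧸ K) ^ i))
            = (∑ i ∈ Finset.range n,
                α i • MonoidAlgebra.of F (G ⧸ K) ((QuotientGroup.mk x : G ⧸ K) ^ i)) →
          q = 1) ∧
        E = ((Nat.card K : F)⁻¹ • ∑ k : K, MonoidAlgebra.of F G (k : G)) *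
              ∑ i ∈ Finset.range n, α i • MonoidAlgebra.of F G (x ^ i)) := by
  constructor
  · -- Part 1
    intro K x n α hn hgen hPCI _hfaith
    have hK : ((Nat.card K : ℕ) : F) ≠ 0 := card_subgroup_ne_zero hchar K
    show IsPrimitiveCentralIdempotent
      ((eIdem K : MonoidAlgebra F G) * ∑ i ∈ Finset.range n, α i • MonoidAlgebra.of F G (x ^ i))
    set S : MonoidAlgebra F G := ∑ i ∈ Finset.range n, α i • MonoidAlgebra.of F G (x ^ i) with hS
    have hE : (eIdem K * S) * eIdem K = eIdem K * S := by
      rw [mul_comm (eIdem K) S, mul_assoc, eIdem_idem K hK, mul_comm S (eIdem K)]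
    have hπ : projK K (eIdem K * S) =
        ∑ i ∈ Finset.range n, α i • MonoidAlgebra.of F (G ⧸ K) ((↑x : G ⧸ K) ^ i) := by
      rw [map_mul, projK_eIdem K hK, one_mul, hS, projK_sum K hK]
    exact (transfer K hK hE).mp (by rw [hπ]; exact hPCI)
  · -- Part 2
    intro E hPCI
    obtain ⟨hidem, -, hne, hprim⟩ := id hPCI
    -- the subgroup of elements acting trivially on E
    set K : Subgroup G :=
      { carrier := {g : G | MonoidAlgebra.of F G g * E = E}
        one_mem' := by
          show MonoidAlgebra.of F G 1 * E = E
          rw [map_one, one_mul]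
        mul_mem' := fun {a b} ha hb => by
          show MonoidAlgebra.of F G (a * b) * E = E
          rw [map_mul, mul_assoc]
          rw [show MonoidAlgebra.of F G b * E = E from hb,
            show MonoidAlgebra.of F G a * E = E from ha]
        inv_mem' := fun {a} ha => by
          show MonoidAlgebra.of F G a⁻¹ * E = E
          have ha' : MonoidAlgebra.of F G a * E = E := ha
          calc MonoidAlgebra.of F G a⁻¹ * E
              = MonoidAlgebra.of F G a⁻¹ * (MonoidAlgebra.of F G a * E) := by rw [ha']
            _ = (MonoidAlgebra.of F G a⁻¹ * MonoidAlgebra.of F G a) * E := by rw [mul_assoc]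
            _ = E := by rw [← map_mul, inv_mul_cancel, map_one, one_mul] } with hKdef
    have hK : ((Nat.card K : ℕ) : F) ≠ 0 := card_subgroup_ne_zero hchar K
    have hmemK : ∀ g : G, g ∈ K ↔ MonoidAlgebra.of F G g * E = E := fun g => Iff.rfl
    have hEe : E * eIdem K = E := by
      rw [mul_comm, eIdem, smul_mul_assoc, Finset.sum_mul,
        Finset.sum_congr rfl (fun (k : K) _ => ((hmemK k.1).1 k.2 : _)),
        Finset.sum_const, Finset.card_univ, ← Nat.card_eq_fintype_card,
        ← Nat.cast_smul_eq_nsmul F, smul_smul, inv_mul_cancel₀ hK, one_smul]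
    -- quotient ring is a domain
    set J : Ideal (MonoidAlgebra F G) := Ideal.span {1 - E} with hJ
    have hmemJ : ∀ z : MonoidAlgebra F G, z ∈ J ↔ z * E = 0 := by
      intro z
      rw [hJ, Ideal.mem_span_singleton]
      constructor
      · rintro ⟨c, rfl⟩
        rw [mul_comm (1 - E) c, mul_assoc, sub_mul, one_mul, hidem.eq, sub_self, mul_zero]
      · intro h
        exact ⟨z, by rw [sub_mul, one_mul, mul_comm E z, h, sub_zero]⟩
    haveI : Nontrivial (MonoidAlgebra F G ⧸ J) := by
      refine ⟨⟨Ideal.Quotient.mk J E, 0, fun h0 => ?_⟩⟩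
      rw [Ideal.Quotient.eq_zero_iff_mem, hmemJ, hidem.eq] at h0
      exact hne h0
    haveI : IsSemisimpleRing (MonoidAlgebra F G) :=
      monoidAlgebra_isSemisimple (card_ne_zero' hchar Fintype.card_pos dvd_rfl)
    haveI : IsSemisimpleRing (MonoidAlgebra F G ⧸ J) :=
      (Ideal.Quotient.mk J).isSemisimpleRing_of_surjective Ideal.Quotient.mk_surjective
    have hmkE : Ideal.Quotient.mk J E = 1 := by
      rw [← map_one (Ideal.Quotient.mk J), Ideal.Quotient.mk_eq_mk_iff_sub_mem, hmemJ,
        sub_mul, one_mul, hidem.eq, sub_self]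
    haveI : IsDomain (MonoidAlgebra F G ⧸ J) := by
      refine isDomain_of_semisimple (fun f' hf' => ?_)
      obtain ⟨y, hy⟩ := Ideal.Quotient.mk_surjective f'
      set f : MonoidAlgebra F G := y * E with hfdef
      have hmkf : Ideal.Quotient.mk J f = f' := by rw [hfdef, map_mul, hy, hmkE, mul_one]
      have hfE : f * E = f := by rw [hfdef, mul_assoc, hidem.eq]
      have hff : f * f = f := by
        have h2 : f * f - f ∈ J := by
          rw [← Ideal.Quotient.eq_zero_iff_mem, map_sub, map_mul, hmkf, hf', sub_self]
        rw [hmemJ, sub_mul] at h2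
        have h3 := sub_eq_zero.mp h2
        rw [mul_assoc, hfE] at h3
        exact h3
      have hEf : IsIdempotentElem (E - f) := by
        show (E - f) * (E - f) = E - f
        have hcalc : (E - f) * (E - f) = E * E - 2 * (f * E) + f * f := by ring
        rw [hcalc, hidem.eq, hfE, hff]
        ring
      have horth : f * (E - f) = 0 := by
        have hcalc : f * (E - f) = f * E - f * f := by ring
        rw [hcalc, hfE, hff, sub_self]
      rcases hprim f (E - f) hff hEf (central_all _) (central_all _) horth (by ring)
        with h0 | h0
      · left; rw [← hmkf, h0, map_zero]
      · right; rw [← hmkf, ← sub_eq_zero.mp h0, hmkE]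
    -- the quotient group G/K is cyclic
    have hχker : ∀ g : G, Ideal.Quotient.mk J (MonoidAlgebra.of F G g) = 1 ↔ g ∈ K := by
      intro g
      rw [← map_one (Ideal.Quotient.mk J), Ideal.Quotient.mk_eq_mk_iff_sub_mem, hmemJ,
        sub_mul, one_mul, sub_eq_zero]
      exact Iff.rfl
    set χ : G →* (MonoidAlgebra F G ⧸ J) :=
      (Ideal.Quotient.mk J).toMonoidHom.comp (MonoidAlgebra.of F G) with hχdef
    set χq : G ⧸ K →* (MonoidAlgebra F G ⧸ J) :=
      QuotientGroup.lift K χ (fun g hg => (hχker g).2 hg) with hχqdef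
    have hinj : Function.Injective χq := by
      refine (injective_iff_map_eq_one χq).mpr (fun q hq => ?_)
      obtain ⟨g, rfl⟩ := QuotientGroup.mk_surjective q
      have : χ g = 1 := hq
      exact (QuotientGroup.eq_one_iff g).2 ((hχker g).1 this)
    haveI : Finite (G ⧸ K) := Quotient.finite _
    have hcyc : IsCyclic (G ⧸ K) := isCyclic_of_subgroup_isDomain χq hinj
    obtain ⟨y, hy⟩ := hcyc.exists_generator
    set x : G := Quotient.out y with hxdef
    have hx : (↑x : G ⧸ K) = y := QuotientGroup.out_eq' y
    have hgen : ∀ g : G ⧸ K, g ∈ Subgroup.zpowers (↑x : G ⧸ K) := by rw [hx]; exact hy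
    set n : ℕ := Nat.card (G ⧸ K) with hndef
    have hord : orderOf (↑x : G ⧸ K) = n := orderOf_eq_card_of_forall_mem_zpowers hgen
    have hnpos : 0 < n := Nat.card_pos
    have hsurjpow : ∀ q : G ⧸ K, ∃ i, i < n ∧ (↑x : G ⧸ K) ^ i = q := by
      intro q
      obtain ⟨m, hm⟩ := mem_powers_iff_mem_zpowers.2 (hgen q)
      refine ⟨m % n, ?_, ?_⟩
      · exact Nat.mod_lt _ hnpos
      · rw [← hord, pow_mod_orderOf]
        exact hm
    set e' : MonoidAlgebra F (G ⧸ K) := projK K E with he'def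
    set α : ℕ → F := fun i => e'.coeff ((↑x : G ⧸ K) ^ i) with hα
    have hsum : (∑ i ∈ Finset.range n,
        α i • MonoidAlgebra.of F (G ⧸ K) ((↑x : G ⧸ K) ^ i)) = e' := by
      refine MonoidAlgebra.ext (Finsupp.ext (fun q => ?_))
      obtain ⟨i₀, hi₀n, hi₀⟩ := hsurjpow q
      rw [MonoidAlgebra.coeff_sum, Finset.sum_apply']
      have hterm : ∀ i, (α i • MonoidAlgebra.of F (G ⧸ K) ((↑x : G ⧸ K) ^ i)).coeff q =
          if ((↑x : G ⧸ K) ^ i) = q then α i else 0 := by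
        intro i
        rw [MonoidAlgebra.coeff_smul, Finsupp.smul_apply, MonoidAlgebra.of_apply, MonoidAlgebra.coeff_single, Finsupp.single_apply]
        split <;> simp
      rw [Finset.sum_congr rfl (fun i _ => hterm i),
        Finset.sum_eq_single_of_mem i₀ (Finset.mem_range.2 hi₀n)
          (fun j hj hjne => by
            rw [if_neg]
            intro hc
            exact hjne (pow_injOn_Iio_orderOf
              (by rw [hord]; exact Set.mem_Iio.2 (Finset.mem_range.1 hj))
              (by rw [hord]; exact Set.mem_Iio.2 hi₀n) (hc.trans hi₀.symm))),
        if_pos hi₀, hα]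
      simp only []
      rw [hi₀]
    have hfaith : ∀ q : G ⧸ K, MonoidAlgebra.of F (G ⧸ K) q * e' = e' → q = 1 := by
      intro q hq
      obtain ⟨g, rfl⟩ := QuotientGroup.mk_surjective q
      have h1 : projK K (MonoidAlgebra.of F G g * E) = projK K E := by
        rw [map_mul, projK_of]
        exact hq
      have h2 : (MonoidAlgebra.of F G g * E) * eIdem K = MonoidAlgebra.of F G g * E := by
        rw [mul_assoc, hEe]
      have h3 : MonoidAlgebra.of F G g * E = E := projK_injOn K hK h2 hEe h1
      exact (QuotientGroup.eq_one_iff g).2 ((hmemK g).2 h3)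
    have hPCIe : IsPrimitiveCentralIdempotent e' := (transfer K hK hEe).mpr hPCI
    have hfinal : E = (eIdem K : MonoidAlgebra F G) *
        ∑ i ∈ Finset.range n, α i • MonoidAlgebra.of F G (x ^ i) := by
      set S : MonoidAlgebra F G := ∑ i ∈ Finset.range n, α i • MonoidAlgebra.of F G (x ^ i)
        with hSdef
      have hS : (eIdem K * S) * eIdem K = eIdem K * S := by
        rw [mul_comm (eIdem K) S, mul_assoc, eIdem_idem K hK, mul_comm S (eIdem K)]
      have hπ : projK K (eIdem K * S) = projK K E := by
        rw [map_mul, projK_eIdem K hK, one_mul, hSdef, projK_sum K hK, hsum]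
      exact (projK_injOn K hK hS hEe hπ).symm
    exact ⟨K, x, n, α, rfl, hgen, by rw [hsum]; exact hPCIe,
      fun q hq => hfaith q (by rw [← hsum]; exact hq), hfinal⟩
end

section
/- Let G be a finite group, H a normal subgroup of prime index p, and x ∈ G with xH generating G/H. Let η be an irreducible complex representation of H with primitive central idempotent e_η ∈ ℂ[H] ⊆ ℂ[G]. If e_η is not central in ℂ[G], then the induced representations η↑_H^G, η^x↑_H^G, …, η^{x^{p−1}}↑_H^G are all equivalent to a single irreducible complex representation ρ of G, and e_ρ = e_η + e_{η^x} + ⋯ + e_{η^{x^{p−1}}}, where η^{x^j} denotes the conjugate representation h ↦ η(x^j h x^{−j}). -/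
/-- The primitive central idempotent `e_η = (deg η / |K|) ∑_{k ∈ K} χ_η(k⁻¹) k` attached to
a complex representation `η` of a finite group `K`, written as an element of `ℂ[G]` via a
homomorphism `φ : K →* G`. -/
noncomputable def pciMap {K G : Type*} [Group K] [Group G] [Finite K] {W : Type*}
    [AddCommGroup W] [Module ℂ W] (φ : K →* G) (η : Representation ℂ K W) :
    MonoidAlgebra ℂ G :=
  haveI := Fintype.ofFinite K
  ∑ k : K, ((Module.finrank ℂ W : ℂ) / (Nat.card K : ℂ) * LinearMap.trace ℂ W (η k⁻¹)) •
      MonoidAlgebra.of ℂ G (φ k)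

/-- The space of the representation of `G` induced from a representation `η` of a subgroup
`H ≤ G`: functions `f : G → W` with `f (h * g) = η h (f g)`. -/
def inducedSpace {G : Type*} [Group G] (H : Subgroup G) {W : Type*} [AddCommGroup W]
    [Module ℂ W] (η : Representation ℂ H W) : Submodule ℂ (G → W) where
  carrier := {f | ∀ (h : H) (g : G), f ((h : G) * g) = η h (f g)}
  add_mem' := by
    intro f g hf hg h x
    simp only [Pi.add_apply, hf h x, hg h x, map_add]
  zero_mem' := by
    intro h x
    simp
  smul_mem' := by
    intro c f hf h x
    simp only [Pi.smul_apply, hf h x, map_smul]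

/-- The representation of `G` induced from the representation `η` of the subgroup `H`,
realized on `inducedSpace H η` by right translation: `(g • f) g' = f (g' * g)`. -/
def inducedRep {G : Type*} [Group G] (H : Subgroup G) {W : Type*} [AddCommGroup W]
    [Module ℂ W] (η : Representation ℂ H W) :
    Representation ℂ G (inducedSpace H η) where
  toFun g :=
    { toFun := fun f => ⟨fun g' => (f : G → W) (g' * g), fun h x => by
        simpa [mul_assoc] using f.2 h (x * g)⟩
      map_add' := fun f₁ f₂ => by ext g'; simp
      map_smul' := fun c f₁ => by ext g'; simp }
  map_one' := by
    ext f g'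
    simp
  map_mul' := fun g₁ g₂ => by
    ext f g'
    simp [mul_assoc]

/-- The conjugation automorphism `h ↦ x h x⁻¹` of a normal subgroup `H ⊴ G`. -/
def conjHom {G : Type*} [Group G] (H : Subgroup G) [hH : H.Normal] (x : G) : H →* H where
  toFun h := ⟨x * (h : G) * x⁻¹, hH.conj_mem _ h.2 x⟩
  map_one' := by ext; simp
  map_mul' := fun a b => by
    ext
    simp only [Subgroup.coe_mul, MulMemClass.mk_mul_mk]
    group

open LinearMap Module

set_option linter.unusedSectionVars false

section Schur
variable {Γ : Type*} [Group Γ] [Fintype Γ]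
variable {W : Type*} [AddCommGroup W] [Module ℂ W] [FiniteDimensional ℂ W]
variable {W₂ : Type*} [AddCommGroup W₂] [Module ℂ W₂] [FiniteDimensional ℂ W₂]

lemma schur_scalar (η : Representation ℂ Γ W) (hη : IsIrreducibleRep η)
    (T : Module.End ℂ W) (hT : ∀ g, η g ∘ₗ T = T ∘ₗ η g) :
    ∃ c : ℂ, T = c • (1 : Module.End ℂ W) := by
  haveI : Nontrivial W := hη.1
  obtain ⟨c, hc⟩ := Module.End.exists_eigenvalue T
  refine ⟨c, ?_⟩
  have hker : ∀ g v, v ∈ ker (T - c • 1) → η g v ∈ ker (T - c • 1) := by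
    intro g v hv
    rw [mem_ker] at hv ⊢
    have h1 : T (η g v) = η g (T v) := by
      have := congrArg (fun (S : Module.End ℂ W) => S v) (hT g)
      simpa using this.symm
    have h2 : T v = c • v := by
      simpa [LinearMap.sub_apply, sub_eq_zero] using hv
    simp [LinearMap.sub_apply, h1, h2]
  have halt := hη.2 (ker (T - c • 1)) hker
  have hne : ker (T - c • 1) ≠ ⊥ := by
    have : T.eigenspace c ≠ ⊥ := hc
    rwa [Module.End.eigenspace_def] at this
  have hz : T - c • 1 = 0 := ker_eq_top.mp (halt.resolve_left hne)
  exact sub_eq_zero.mp hz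

lemma schur_equiv (η : Representation ℂ Γ W) (σ : Representation ℂ Γ W₂)
    (hη : IsIrreducibleRep η) (hσ : IsIrreducibleRep σ)
    (T : W →ₗ[ℂ] W₂) (hT : ∀ g, T ∘ₗ η g = σ g ∘ₗ T) (hT0 : T ≠ 0) :
    RepEquiv η σ := by
  have happ : ∀ g v, T (η g v) = σ g (T v) := fun g v =>
    congrFun (congrArg DFunLike.coe (hT g)) v
  have hker : ∀ g v, v ∈ ker T → η g v ∈ ker T := by
    intro g v hv
    rw [mem_ker] at hv ⊢
    rw [happ, hv, map_zero]
  have hrange : ∀ g v, v ∈ range T → σ g v ∈ range T := by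
    rintro g _ ⟨v, rfl⟩
    exact ⟨η g v, happ g v⟩
  have hk : ker T = ⊥ := by
    rcases hη.2 (ker T) hker with h | h
    · exact h
    · exact absurd (ker_eq_top.mp h) hT0
  have hr : range T = ⊤ := by
    rcases hσ.2 (range T) hrange with h | h
    · exact absurd (range_eq_bot.mp h) hT0
    · exact h
  exact ⟨LinearEquiv.ofBijective T ⟨ker_eq_bot.mp hk, range_eq_top.mp hr⟩,
    fun g v => happ g v⟩

lemma avg_intertwine (η : Representation ℂ Γ W) (σ : Representation ℂ Γ W₂)
    (A : W →ₗ[ℂ] W₂) (g : Γ) :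
    (∑ h : Γ, σ h ∘ₗ A ∘ₗ η h⁻¹) ∘ₗ η g = σ g ∘ₗ (∑ h : Γ, σ h ∘ₗ A ∘ₗ η h⁻¹) := by
  ext v
  simp only [comp_apply, LinearMap.sum_apply, map_sum]
  refine Fintype.sum_equiv (Equiv.mulLeft g⁻¹) _ _ (fun h => ?_)
  simp only [Equiv.coe_mulLeft]
  rw [show (η h⁻¹) ((η g) v) = η (h⁻¹ * g) v from by rw [← Module.End.mul_apply, ← map_mul]]
  rw [show ((g⁻¹ * h)⁻¹ : Γ) = h⁻¹ * g from by group]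
  rw [← Module.End.mul_apply (σ g), ← map_mul]
  rw [show (g * (g⁻¹ * h) : Γ) = h from by group]

lemma sum_conj (η : Representation ℂ Γ W) (hη : IsIrreducibleRep η) (A : Module.End ℂ W) :
    ∑ g : Γ, η g ∘ₗ A ∘ₗ η g⁻¹ =
      (((Fintype.card Γ : ℂ) * trace ℂ W A) / (finrank ℂ W : ℂ)) • (1 : Module.End ℂ W) := by
  haveI : Nontrivial W := hη.1
  obtain ⟨c, hc⟩ := schur_scalar η hη (∑ g : Γ, η g ∘ₗ A ∘ₗ η g⁻¹)
    (fun g => (avg_intertwine η η A g).symm)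
  have htr1 : ∀ g : Γ, trace ℂ W (η g ∘ₗ A ∘ₗ η g⁻¹) = trace ℂ W A := by
    intro g
    rw [trace_comp_comm', comp_assoc]
    have : η g⁻¹ ∘ₗ η g = LinearMap.id := by
      ext w
      rw [comp_apply, ← Module.End.mul_apply, ← map_mul, inv_mul_cancel, map_one]
      rfl
    rw [this, comp_id]
  have htr : trace ℂ W (∑ g : Γ, η g ∘ₗ A ∘ₗ η g⁻¹)
      = (Fintype.card Γ : ℂ) * trace ℂ W A := by
    rw [map_sum]
    simp [htr1, Finset.sum_const, nsmul_eq_mul]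
  have hd : (finrank ℂ W : ℂ) ≠ 0 :=
    Nat.cast_ne_zero.mpr (finrank_pos (R := ℂ) (M := W)).ne'
  have hcd : c * (finrank ℂ W : ℂ) = (Fintype.card Γ : ℂ) * trace ℂ W A := by
    rw [hc] at htr
    rw [← htr, map_smul, trace_one]
    simp [mul_comm]
  rw [hc]
  congr 1
  field_simp
  linear_combination hcd

lemma sum_conj_zero (η : Representation ℂ Γ W) (σ : Representation ℂ Γ W₂)
    (hη : IsIrreducibleRep η) (hσ : IsIrreducibleRep σ) (hne : ¬ RepEquiv η σ)
    (A : W →ₗ[ℂ] W₂) :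
    ∑ g : Γ, σ g ∘ₗ A ∘ₗ η g⁻¹ = 0 := by
  by_contra hT0
  exact hne (schur_equiv η σ hη hσ _ (fun g => avg_intertwine η σ A g) hT0)

end Schur

section CharSums
variable {Γ : Type*} [Group Γ] [Fintype Γ]
variable {W : Type*} [AddCommGroup W] [Module ℂ W] [FiniteDimensional ℂ W]

lemma trace_stdBasisMatrix' {n : ℕ} (a b : Fin n) :
    Matrix.trace (Matrix.single a b (1 : ℂ)) = if a = b then 1 else 0 := by
  classical
  simp only [Matrix.trace, Matrix.diag, Matrix.single, Matrix.of_apply]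
  by_cases h : a = b
  · subst h; simp
  · rw [if_neg h, Finset.sum_eq_zero]
    intro i _
    rw [if_neg]
    rintro ⟨rfl, h2⟩
    exact h h2.symm

lemma mul_std_mul {n : ℕ} (M N : Matrix (Fin n) (Fin n) ℂ) (a b c e : Fin n) :
    (M * Matrix.single a b (1 : ℂ) * N) c e = M c a * N b e := by
  classical
  rw [Matrix.mul_assoc, Matrix.mul_apply]
  have hstep : ∀ k, (Matrix.single a b (1:ℂ) * N) k e = if k = a then N b e else 0 := by
    intro k
    by_cases hk : k = a
    · subst hk
      rw [Matrix.single_mul_apply_same, one_mul, if_pos rfl]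
    · rw [if_neg hk, Matrix.single_mul_apply_of_ne _ _ _ _ _ hk]
  simp only [hstep, mul_ite, mul_zero]
  simp [Finset.sum_ite_eq', Finset.mem_univ]

lemma key_entry_self (η : Representation ℂ Γ W) (hη : IsIrreducibleRep η)
    (b : Basis (Fin (finrank ℂ W)) ℂ W) (a b' : Fin (finrank ℂ W)) :
    ∑ g : Γ, LinearMap.toMatrix b b (η g) * Matrix.single a b' 1 *
        LinearMap.toMatrix b b (η g⁻¹)
      = (((Fintype.card Γ : ℂ) * (if a = b' then 1 else 0)) / (finrank ℂ W : ℂ)) •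
          (1 : Matrix (Fin (finrank ℂ W)) (Fin (finrank ℂ W)) ℂ) := by
  classical
  have h := sum_conj η hη (Matrix.toLin b b (Matrix.single a b' 1))
  have h2 := congrArg (LinearMap.toMatrix b b) h
  rw [map_sum, map_smul] at h2
  simp only [LinearMap.toMatrix_comp b b b, LinearMap.toMatrix_toLin] at h2
  rw [LinearMap.toMatrix_one] at h2
  rw [trace_eq_matrix_trace ℂ b, LinearMap.toMatrix_toLin, trace_stdBasisMatrix'] at h2
  simpa [Matrix.mul_assoc] using h2

lemma key_entry_other (η σ : Representation ℂ Γ W) (hη : IsIrreducibleRep η)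
    (hσ : IsIrreducibleRep σ) (hne : ¬ RepEquiv η σ)
    (b : Basis (Fin (finrank ℂ W)) ℂ W) (a b' : Fin (finrank ℂ W)) :
    ∑ g : Γ, LinearMap.toMatrix b b (σ g) * Matrix.single a b' 1 *
        LinearMap.toMatrix b b (η g⁻¹) = 0 := by
  classical
  have h := sum_conj_zero η σ hη hσ hne (Matrix.toLin b b (Matrix.single a b' 1))
  have h2 := congrArg (LinearMap.toMatrix b b) h
  rw [map_sum, map_zero] at h2
  simp only [LinearMap.toMatrix_comp b b b, LinearMap.toMatrix_toLin] at h2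
  simpa [Matrix.mul_assoc] using h2

lemma sum_char_self (η : Representation ℂ Γ W) (hη : IsIrreducibleRep η) :
    ∑ g : Γ, (LinearMap.trace ℂ W (η g⁻¹)) • η g
      = ((Fintype.card Γ : ℂ) / (finrank ℂ W : ℂ)) • (1 : Module.End ℂ W) := by
  classical
  let b : Basis (Fin (finrank ℂ W)) ℂ W := finBasis ℂ W
  apply (LinearMap.toMatrix b b).injective
  rw [map_sum, map_smul, LinearMap.toMatrix_one]
  ext c e
  have key : ∀ b0, ∑ g : Γ, (LinearMap.toMatrix b b (η g⁻¹)) b0 b0 *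
      (LinearMap.toMatrix b b (η g)) c e
      = (((Fintype.card Γ : ℂ) * (if e = b0 then 1 else 0)) / (finrank ℂ W : ℂ)) *
        (1 : Matrix (Fin (finrank ℂ W)) (Fin (finrank ℂ W)) ℂ) c b0 := by
    intro b0
    have h := congrArg (fun X : Matrix (Fin (finrank ℂ W)) (Fin (finrank ℂ W)) ℂ => X c b0)
      (key_entry_self η hη b e b0)
    simp only [Matrix.sum_apply, Matrix.smul_apply, smul_eq_mul] at h
    rw [← h]
    exact Finset.sum_congr rfl fun g _ => by rw [mul_std_mul, mul_comm]
  simp only [map_smul, Finset.sum_apply, Matrix.sum_apply, Matrix.smul_apply,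
    trace_eq_matrix_trace ℂ b, Matrix.trace, Matrix.diag, smul_eq_mul]
  calc ∑ g : Γ, (∑ b0, (LinearMap.toMatrix b b (η g⁻¹)) b0 b0) *
        (LinearMap.toMatrix b b (η g)) c e
      = ∑ b0, ∑ g : Γ, (LinearMap.toMatrix b b (η g⁻¹)) b0 b0 *
        (LinearMap.toMatrix b b (η g)) c e := by
        rw [← Finset.sum_comm]
        exact Finset.sum_congr rfl fun g _ => Finset.sum_mul _ _ _
    _ = ∑ b0, (((Fintype.card Γ : ℂ) * (if e = b0 then 1 else 0)) / (finrank ℂ W : ℂ)) *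
        (1 : Matrix (Fin (finrank ℂ W)) (Fin (finrank ℂ W)) ℂ) c b0 :=
        Finset.sum_congr rfl fun b0 _ => key b0
    _ = (Fintype.card Γ : ℂ) / (finrank ℂ W : ℂ) *
        (1 : Matrix (Fin (finrank ℂ W)) (Fin (finrank ℂ W)) ℂ) c e := by
        rw [Finset.sum_eq_single e]
        · simp
        · intro b0 _ hb0
          simp [Ne.symm hb0]
        · simp

lemma sum_char_other (η σ : Representation ℂ Γ W) (hη : IsIrreducibleRep η)
    (hσ : IsIrreducibleRep σ) (hne : ¬ RepEquiv η σ) :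
    ∑ g : Γ, (LinearMap.trace ℂ W (η g⁻¹)) • σ g = 0 := by
  classical
  let b : Basis (Fin (finrank ℂ W)) ℂ W := finBasis ℂ W
  apply (LinearMap.toMatrix b b).injective
  rw [map_sum, map_zero]
  ext c e
  have key : ∀ b0, ∑ g : Γ, (LinearMap.toMatrix b b (η g⁻¹)) b0 b0 *
      (LinearMap.toMatrix b b (σ g)) c e = 0 := by
    intro b0
    have h := congrArg (fun X : Matrix (Fin (finrank ℂ W)) (Fin (finrank ℂ W)) ℂ => X c b0)
      (key_entry_other η σ hη hσ hne b e b0)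
    simp only [Matrix.sum_apply, Matrix.zero_apply] at h
    rw [← h]
    exact Finset.sum_congr rfl fun g _ => by rw [mul_std_mul, mul_comm]
  simp only [map_smul, Finset.sum_apply, Matrix.sum_apply, Matrix.smul_apply,
    trace_eq_matrix_trace ℂ b, Matrix.trace, Matrix.diag, smul_eq_mul, Matrix.zero_apply]
  calc ∑ g : Γ, (∑ b0, (LinearMap.toMatrix b b (η g⁻¹)) b0 b0) *
        (LinearMap.toMatrix b b (σ g)) c e
      = ∑ b0, ∑ g : Γ, (LinearMap.toMatrix b b (η g⁻¹)) b0 b0 *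
        (LinearMap.toMatrix b b (σ g)) c e := by
        rw [← Finset.sum_comm]
        exact Finset.sum_congr rfl fun g _ => Finset.sum_mul _ _ _
    _ = 0 := by simp [key]

end CharSums

section Induced
variable {G : Type*} [Group G] (H : Subgroup G) [H.Normal]
variable {W : Type*} [AddCommGroup W] [Module ℂ W]
variable (η : Representation ℂ H W) (x : G)

lemma mem_inducedSpace {f : G → W} :
    f ∈ inducedSpace H η ↔ ∀ (h : H) (g : G), f ((h : G) * g) = η h (f g) :=
  Iff.rfl

open scoped Classical in
/-- The function supported on the coset `H x^j` determined by its value `w` at `x^j`. -/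
noncomputable def betaFn (j : ℕ) (w : W) : G → W :=
  fun g => if hg : g * (x ^ j)⁻¹ ∈ H then η ⟨g * (x ^ j)⁻¹, hg⟩ w else 0

lemma betaFn_mem (j : ℕ) (w : W) : betaFn H η x j w ∈ inducedSpace H η := by
  rw [mem_inducedSpace]
  intro h g
  unfold betaFn
  by_cases hg : g * (x ^ j)⁻¹ ∈ H
  · have hg2 : (h : G) * g * (x ^ j)⁻¹ ∈ H := by
      rw [mul_assoc]; exact H.mul_mem h.2 hg
    rw [dif_pos hg, dif_pos hg2]
    have he : (⟨(h : G) * g * (x ^ j)⁻¹, hg2⟩ : H) = h * ⟨g * (x ^ j)⁻¹, hg⟩ := by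
      ext; simp [mul_assoc]
    rw [he, map_mul, Module.End.mul_apply]
  · have hg2 : ¬ ((h : G) * g * (x ^ j)⁻¹ ∈ H) := by
      intro hmem
      apply hg
      have : (h : G)⁻¹ * ((h : G) * g * (x ^ j)⁻¹) ∈ H := H.mul_mem (H.inv_mem h.2) hmem
      simpa [mul_assoc] using this
    rw [dif_neg hg, dif_neg hg2, map_zero]

/-- `betaFn` bundled as a linear map into the induced space. -/
noncomputable def betaLin (j : ℕ) : W →ₗ[ℂ] ↥(inducedSpace H η) where
  toFun w := ⟨betaFn H η x j w, betaFn_mem H η x j w⟩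
  map_add' := by
    intro w1 w2
    apply Subtype.ext
    funext g
    show betaFn H η x j (w1 + w2) g = betaFn H η x j w1 g + betaFn H η x j w2 g
    unfold betaFn
    by_cases hg : g * (x ^ j)⁻¹ ∈ H
    · rw [dif_pos hg, dif_pos hg, dif_pos hg, map_add]
    · rw [dif_neg hg, dif_neg hg, dif_neg hg, add_zero]
  map_smul' := by
    intro c w
    apply Subtype.ext
    funext g
    show betaFn H η x j (c • w) g = c • betaFn H η x j w g
    unfold betaFn
    by_cases hg : g * (x ^ j)⁻¹ ∈ H
    · rw [dif_pos hg, dif_pos hg, map_smul]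
    · rw [dif_neg hg, dif_neg hg, smul_zero]

lemma betaLin_coe (j : ℕ) (w : W) :
    ((betaLin H η x j w : ↥(inducedSpace H η)) : G → W) = betaFn H η x j w := rfl

/-- Evaluation at `x^j` as a linear map. -/
noncomputable def evLin (j : ℕ) : ↥(inducedSpace H η) →ₗ[ℂ] W where
  toFun f := (f : G → W) (x ^ j)
  map_add' := by intro f g; simp
  map_smul' := by intro c f; simp

section WithOrder
variable (p : ℕ)

lemma ord_eq [Fintype G] (hidx : H.index = p)
    (hx : ∀ g : G ⧸ H, g ∈ Subgroup.zpowers (QuotientGroup.mk x : G ⧸ H)) :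
    orderOf (QuotientGroup.mk x : G ⧸ H) = p := by
  rw [orderOf_eq_card_of_forall_mem_zpowers hx, ← Subgroup.index_eq_card, hidx]

lemma xp_mem (hord : orderOf (QuotientGroup.mk x : G ⧸ H) = p) : x ^ p ∈ H := by
  rw [← QuotientGroup.eq_one_iff]
  have h1 : (QuotientGroup.mk x : G ⧸ H) ^ p = 1 := by
    rw [← hord]; exact pow_orderOf_eq_one _
  rw [← QuotientGroup.mk_pow] at h1
  exact h1

lemma idx_exists (hp : 0 < p) (hord : orderOf (QuotientGroup.mk x : G ⧸ H) = p)
    (hx : ∀ g : G ⧸ H, g ∈ Subgroup.zpowers (QuotientGroup.mk x : G ⧸ H)) (g : G) :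
    ∃ j, j < p ∧ g * (x ^ j)⁻¹ ∈ H := by
  obtain ⟨n, hn⟩ := hx (QuotientGroup.mk g)
  refine ⟨(n % (p : ℤ)).toNat, ?_, ?_⟩
  · have h1 : n % (p : ℤ) < (p : ℤ) := Int.emod_lt_of_pos n (by exact_mod_cast hp)
    omega
  · rw [← QuotientGroup.eq_one_iff, QuotientGroup.mk_mul, QuotientGroup.mk_inv,
      QuotientGroup.mk_pow, ← hn]
    have h0 : (0 : ℤ) ≤ n % (p : ℤ) := Int.emod_nonneg n (by positivity)
    have h2 : (QuotientGroup.mk x : G ⧸ H) ^ ((n % (p : ℤ)).toNat) =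
        (QuotientGroup.mk x : G ⧸ H) ^ n := by
      rw [← zpow_natCast, Int.toNat_of_nonneg h0, ← hord, zpow_mod_orderOf]
    rw [h2, mul_inv_cancel]

lemma idx_unique (hord : orderOf (QuotientGroup.mk x : G ⧸ H) = p) {g : G} {i j : ℕ}
    (hi : i < p) (hj : j < p) (hgi : g * (x ^ i)⁻¹ ∈ H) (hgj : g * (x ^ j)⁻¹ ∈ H) :
    i = j := by
  have hmem : x ^ i * (x ^ j)⁻¹ ∈ H := by
    have := H.mul_mem (H.inv_mem hgi) hgj
    simpa [mul_assoc] using this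
  have hq : (QuotientGroup.mk x : G ⧸ H) ^ i = (QuotientGroup.mk x : G ⧸ H) ^ j := by
    have h1 : (QuotientGroup.mk (x ^ i * (x ^ j)⁻¹) : G ⧸ H) = 1 :=
      (QuotientGroup.eq_one_iff _).mpr hmem
    rw [QuotientGroup.mk_mul, QuotientGroup.mk_inv, QuotientGroup.mk_pow,
      QuotientGroup.mk_pow, mul_inv_eq_one] at h1
    exact h1
  exact pow_injOn_Iio_orderOf (by simpa [hord] using hi) (by simpa [hord] using hj) hq

end WithOrder

lemma induced_apply_coset {f : G → W} (hf : f ∈ inducedSpace H η) {g : G} {j : ℕ}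
    (hg : g * (x ^ j)⁻¹ ∈ H) : f g = η ⟨g * (x ^ j)⁻¹, hg⟩ (f (x ^ j)) := by
  rw [mem_inducedSpace] at hf
  have := hf ⟨g * (x ^ j)⁻¹, hg⟩ (x ^ j)
  simpa [inv_mul_cancel, mul_assoc] using this

end Induced

section Induced2
variable {G : Type*} [Group G] (H : Subgroup G) [hN : H.Normal]
variable {W : Type*} [AddCommGroup W] [Module ℂ W]
variable (η : Representation ℂ H W) (x : G)

lemma inducedRep_coe (g : G) (f : ↥(inducedSpace H η)) :
    ((inducedRep H η g f : ↥(inducedSpace H η)) : G → W) = fun g' => (f : G → W) (g' * g) :=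
  rfl

lemma betaLin_conj_action (j : ℕ) (h : H) (w : W) :
    inducedRep H η (h : G) (betaLin H η x j w) =
      betaLin H η x j (η (conjHom H (x ^ j) h) w) := by
  apply Subtype.ext
  funext g
  show betaFn H η x j w (g * (h : G)) = betaFn H η x j (η (conjHom H (x ^ j) h) w) g
  unfold betaFn
  by_cases hg : g * (x ^ j)⁻¹ ∈ H
  · have e1 : g * (h : G) * (x ^ j)⁻¹ = (g * (x ^ j)⁻¹) * (x ^ j * (h : G) * (x ^ j)⁻¹) := by
      group
    have hg2 : g * (h : G) * (x ^ j)⁻¹ ∈ H := by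
      rw [e1]; exact H.mul_mem hg (hN.conj_mem _ h.2 _)
    rw [dif_pos hg2, dif_pos hg]
    have key : (⟨g * (h : G) * (x ^ j)⁻¹, hg2⟩ : H) =
        ⟨g * (x ^ j)⁻¹, hg⟩ * conjHom H (x ^ j) h := by
      ext
      show g * (h : G) * (x ^ j)⁻¹ = (g * (x ^ j)⁻¹) * (x ^ j * (h : G) * (x ^ j)⁻¹)
      exact e1
    rw [key, map_mul, Module.End.mul_apply]
  · have hg2 : ¬ (g * (h : G) * (x ^ j)⁻¹ ∈ H) := by
      intro hmem
      apply hg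
      have e2 : g * (x ^ j)⁻¹ = (g * (h : G) * (x ^ j)⁻¹) * (x ^ j * ((h : G))⁻¹ * (x ^ j)⁻¹) := by
        group
      rw [e2]
      exact H.mul_mem hmem (hN.conj_mem _ (H.inv_mem h.2) _)
    rw [dif_neg hg, dif_neg hg2]

lemma betaLin_x_action_succ (j : ℕ) (w : W) :
    inducedRep H η x (betaLin H η x (j + 1) w) = betaLin H η x j w := by
  apply Subtype.ext
  funext g
  show betaFn H η x (j + 1) w (g * x) = betaFn H η x j w g
  have key : g * x * (x ^ (j + 1))⁻¹ = g * (x ^ j)⁻¹ := by rw [pow_succ]; group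
  unfold betaFn
  by_cases hg : g * (x ^ j)⁻¹ ∈ H
  · have h1 : g * x * (x ^ (j + 1))⁻¹ ∈ H := by rw [key]; exact hg
    rw [dif_pos h1, dif_pos hg]
    have he : (⟨g * x * (x ^ (j + 1))⁻¹, h1⟩ : H) = ⟨g * (x ^ j)⁻¹, hg⟩ := Subtype.ext key
    rw [he]
  · have h1 : ¬ (g * x * (x ^ (j + 1))⁻¹ ∈ H) := by rw [key]; exact hg
    rw [dif_neg h1, dif_neg hg]

lemma betaLin_x_action_zero (p : ℕ) (hp : 0 < p) (hxp : x ^ p ∈ H) (w : W) :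
    inducedRep H η x (betaLin H η x 0 w) =
      betaLin H η x (p - 1) (η ⟨x ^ p, hxp⟩ w) := by
  apply Subtype.ext
  funext g
  show betaFn H η x 0 w (g * x) = betaFn H η x (p - 1) (η ⟨x ^ p, hxp⟩ w) g
  have e0 : g * x * (x ^ 0)⁻¹ = g * x := by simp
  have hpp : x ^ (p - 1) * x = x ^ p := by
    rw [← pow_succ, Nat.sub_add_cancel hp]
  have ep : g * x = (g * (x ^ (p - 1))⁻¹) * x ^ p := by rw [← hpp]; group
  unfold betaFn
  by_cases hg : g * (x ^ (p - 1))⁻¹ ∈ H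
  · have h1 : g * x * (x ^ 0)⁻¹ ∈ H := by rw [e0, ep]; exact H.mul_mem hg hxp
    rw [dif_pos h1, dif_pos hg]
    have key : (⟨g * x * (x ^ 0)⁻¹, h1⟩ : H) = ⟨g * (x ^ (p - 1))⁻¹, hg⟩ * ⟨x ^ p, hxp⟩ := by
      ext
      show g * x * (x ^ 0)⁻¹ = g * (x ^ (p - 1))⁻¹ * x ^ p
      rw [e0, ep]
    rw [key, map_mul, Module.End.mul_apply]
  · have h1 : ¬ (g * x * (x ^ 0)⁻¹ ∈ H) := by
      rw [e0, ep]
      intro hmem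
      apply hg
      have := H.mul_mem hmem (H.inv_mem hxp)
      simpa [mul_assoc] using this
    rw [dif_neg h1, dif_neg hg]

lemma betaFn_self (j : ℕ) (w : W) : betaFn H η x j w (x ^ j) = w := by
  unfold betaFn
  have h1 : x ^ j * (x ^ j)⁻¹ ∈ H := by rw [mul_inv_cancel]; exact H.one_mem
  rw [dif_pos h1]
  have key : (⟨x ^ j * (x ^ j)⁻¹, h1⟩ : H) = 1 := by ext; simp
  rw [key, map_one, Module.End.one_apply]

lemma betaFn_ne (p : ℕ) (hord : orderOf (QuotientGroup.mk x : G ⧸ H) = p) {i j : ℕ}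
    (hi : i < p) (hj : j < p) (hne : i ≠ j) (w : W) :
    betaFn H η x j w (x ^ i) = 0 := by
  unfold betaFn
  rw [dif_neg]
  intro hgj
  have h1 : x ^ i * (x ^ i)⁻¹ ∈ H := by rw [mul_inv_cancel]; exact H.one_mem
  exact hne (idx_unique H x p hord hi hj h1 hgj)

lemma sum_betaLin (p : ℕ) (hp : 0 < p)
    (hord : orderOf (QuotientGroup.mk x : G ⧸ H) = p)
    (hx : ∀ g : G ⧸ H, g ∈ Subgroup.zpowers (QuotientGroup.mk x : G ⧸ H))
    (f : ↥(inducedSpace H η)) :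
    ∑ j ∈ Finset.range p, betaLin H η x j (evLin H η x j f) = f := by
  apply Subtype.ext
  rw [Submodule.coe_sum]
  funext g
  rw [Finset.sum_apply]
  obtain ⟨i, hi, hgi⟩ := idx_exists H x p hp hord hx g
  rw [Finset.sum_eq_single_of_mem i (Finset.mem_range.mpr hi)]
  · show betaFn H η x i ((f : G → W) (x ^ i)) g = (f : G → W) g
    unfold betaFn
    rw [dif_pos hgi]
    exact (induced_apply_coset H η x f.2 hgi).symm
  · intro j hjr hne
    show betaFn H η x j ((f : G → W) (x ^ j)) g = 0
    unfold betaFn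
    rw [dif_neg]
    intro hgj
    exact hne (idx_unique H x p hord (Finset.mem_range.mp hjr) hi hgj hgi)

end Induced2

section ConjRep
variable {G : Type*} [Group G] (H : Subgroup G) [hN : H.Normal]
variable {W : Type*} [AddCommGroup W] [Module ℂ W]
variable (η : Representation ℂ H W)

lemma conj_mem' (y : G) (h : H) : y⁻¹ * (h : G) * y ∈ H := by
  have := hN.conj_mem _ h.2 y⁻¹
  simpa using this

lemma conjHom_conj (y : G) (h : H) :
    conjHom H y ⟨y⁻¹ * (h : G) * y, conj_mem' H y h⟩ = h := by
  ext
  show y * (y⁻¹ * (h : G) * y) * y⁻¹ = (h : G)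
  group

lemma irr_comp_conj (y : G) (hη : IsIrreducibleRep η) :
    IsIrreducibleRep (η.comp (conjHom H y)) := by
  refine ⟨hη.1, ?_⟩
  intro W' hW'
  apply hη.2 W'
  intro h v hv
  have := hW' ⟨y⁻¹ * (h : G) * y, conj_mem' H y h⟩ v hv
  rw [MonoidHom.comp_apply, conjHom_conj] at this
  exact this

lemma repEquiv_symm {k G V V₂ : Type*} [CommSemiring k] [Monoid G] [AddCommMonoid V]
    [Module k V] [AddCommMonoid V₂] [Module k V₂] {ρ : Representation k G V}
    {σ : Representation k G V₂} (h : RepEquiv ρ σ) : RepEquiv σ ρ := by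
  obtain ⟨e, he⟩ := h
  refine ⟨e.symm, fun g v => ?_⟩
  have := he g (e.symm v)
  rw [e.apply_symm_apply] at this
  rw [← this, e.symm_apply_apply]

lemma repEquiv_char {Γ V V₂ : Type*} [Group Γ] [AddCommGroup V] [Module ℂ V]
    [AddCommGroup V₂] [Module ℂ V₂] (σ : Representation ℂ Γ V) (τ : Representation ℂ Γ V₂)
    (h : RepEquiv σ τ) (g : Γ) :
    LinearMap.trace ℂ V (σ g) = LinearMap.trace ℂ V₂ (τ g) := by
  obtain ⟨e, he⟩ := h
  have key : τ g = e.conj (σ g) := by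
    ext v
    rw [LinearEquiv.conj_apply]
    simp only [LinearMap.comp_apply, LinearEquiv.coe_coe]
    rw [he g (e.symm v), e.apply_symm_apply]
  rw [key, LinearMap.trace_conj']

lemma repEquiv_induced_conj (y : G) :
    RepEquiv (inducedRep H (η.comp (conjHom H y))) (inducedRep H η) := by
  have fwd_mem : ∀ f : ↥(inducedSpace H (η.comp (conjHom H y))),
      (fun g => (f : G → W) (y⁻¹ * g)) ∈ inducedSpace H η := by
    intro f
    rw [mem_inducedSpace]
    intro h g
    have step : y⁻¹ * ((h : G) * g) =
        ((⟨y⁻¹ * (h : G) * y, conj_mem' H y h⟩ : H) : G) * (y⁻¹ * g) := by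
      show y⁻¹ * ((h : G) * g) = (y⁻¹ * (h : G) * y) * (y⁻¹ * g)
      group
    rw [step]
    have hf := (mem_inducedSpace H (η.comp (conjHom H y))).mp f.2
      ⟨y⁻¹ * (h : G) * y, conj_mem' H y h⟩ (y⁻¹ * g)
    rw [hf, MonoidHom.comp_apply, conjHom_conj]
  have bwd_mem : ∀ f : ↥(inducedSpace H η),
      (fun g => (f : G → W) (y * g)) ∈ inducedSpace H (η.comp (conjHom H y)) := by
    intro f
    rw [mem_inducedSpace]
    intro h g
    have step : y * ((h : G) * g) = ((conjHom H y h : H) : G) * (y * g) := by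
      show y * ((h : G) * g) = (y * (h : G) * y⁻¹) * (y * g)
      group
    rw [step]
    have hf := (mem_inducedSpace H η).mp f.2 (conjHom H y h) (y * g)
    rw [hf, MonoidHom.comp_apply]
  refine ⟨{ toFun := fun f => ⟨fun g => (f : G → W) (y⁻¹ * g), fwd_mem f⟩
            map_add' := fun f1 f2 => rfl
            map_smul' := fun c f => rfl
            invFun := fun f => ⟨fun g => (f : G → W) (y * g), bwd_mem f⟩
            left_inv := ?_
            right_inv := ?_ }, ?_⟩
  · intro f
    apply Subtype.ext
    funext g
    show (f : G → W) (y⁻¹ * (y * g)) = (f : G → W) g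
    rw [inv_mul_cancel_left]
  · intro f
    apply Subtype.ext
    funext g
    show (f : G → W) (y * (y⁻¹ * g)) = (f : G → W) g
    rw [mul_inv_cancel_left]
  · intro g0 f
    apply Subtype.ext
    funext g
    show (f : G → W) (y⁻¹ * g * g0) = (f : G → W) (y⁻¹ * (g * g0))
    rw [mul_assoc]

end ConjRep

section CP
variable {G : Type*} [Group G] (H : Subgroup G) [hN : H.Normal]
variable {W : Type*} [AddCommGroup W] [Module ℂ W]
variable (η : Representation ℂ H W)

/-- The character of `η` is invariant under conjugation by `y`. -/
def CP (y : G) : Prop :=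
  ∀ h : H, LinearMap.trace ℂ W (η ⟨y * (h : G) * y⁻¹, hN.conj_mem _ h.2 y⟩) =
    LinearMap.trace ℂ W (η h)

lemma CP_mem (k : H) : CP H η (k : G) := by
  intro h
  have e1 : (⟨(k : G) * (h : G) * (k : G)⁻¹, hN.conj_mem _ h.2 k⟩ : H) = k * h * k⁻¹ := by
    ext; push_cast; ring_nf
  rw [e1, map_mul, LinearMap.trace_mul_comm, ← map_mul, inv_mul_cancel_left]

lemma CP_one : CP H η 1 := by
  have := CP_mem H η 1
  simpa using this

lemma CP_mul {y z : G} (hy : CP H η y) (hz : CP H η z) : CP H η (y * z) := by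
  intro h
  have e1 : (⟨(y * z) * (h : G) * (y * z)⁻¹, hN.conj_mem _ h.2 (y * z)⟩ : H) =
      ⟨y * ((⟨z * (h : G) * z⁻¹, hN.conj_mem _ h.2 z⟩ : H) : G) * y⁻¹,
        hN.conj_mem _ (hN.conj_mem _ h.2 z) y⟩ := by
    ext; show (y * z) * (h : G) * (y * z)⁻¹ = y * (z * (h : G) * z⁻¹) * y⁻¹; group
  rw [e1, hy ⟨z * (h : G) * z⁻¹, hN.conj_mem _ h.2 z⟩, hz h]

lemma CP_inv {y : G} (hy : CP H η y) : CP H η y⁻¹ := by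
  intro h
  have h0 : y⁻¹ * (h : G) * y ∈ H := conj_mem' H y h
  have key := hy ⟨y⁻¹ * (h : G) * y, h0⟩
  have e1 : (⟨y * (y⁻¹ * (h : G) * y) * y⁻¹, hN.conj_mem _ h0 y⟩ : H) = h := by
    ext; show y * (y⁻¹ * (h : G) * y) * y⁻¹ = (h : G); group
  rw [e1] at key
  have e2 : (⟨y⁻¹ * (h : G) * y⁻¹⁻¹, hN.conj_mem _ h.2 y⁻¹⟩ : H) =
      ⟨y⁻¹ * (h : G) * y, h0⟩ := by
    ext; show y⁻¹ * (h : G) * y⁻¹⁻¹ = y⁻¹ * (h : G) * y; rw [inv_inv]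
  rw [e2, ← key]

lemma CP_pow {y : G} (hy : CP H η y) : ∀ n : ℕ, CP H η (y ^ n) := by
  intro n
  induction n with
  | zero => simpa [pow_zero] using CP_one H η
  | succ n ih => rw [pow_succ]; exact CP_mul H η ih hy

lemma CP_zpow {y : G} (hy : CP H η y) : ∀ n : ℤ, CP H η (y ^ n) := by
  intro n
  cases n with
  | ofNat k => rw [Int.ofNat_eq_coe, zpow_natCast]; exact CP_pow H η hy k
  | negSucc k => rw [zpow_negSucc]; exact CP_inv H η (CP_pow H η hy (k + 1))

lemma cp_all_of_cp_x (x : G)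
    (hx : ∀ g : G ⧸ H, g ∈ Subgroup.zpowers (QuotientGroup.mk x : G ⧸ H))
    (hcpx : CP H η x) : ∀ y : G, CP H η y := by
  intro y
  obtain ⟨n, hn⟩ := hx (QuotientGroup.mk y)
  have hn' : (QuotientGroup.mk x : G ⧸ H) ^ n = QuotientGroup.mk y := hn
  have hm : (x ^ n)⁻¹ * y ∈ H := by
    rw [← QuotientGroup.eq_one_iff, QuotientGroup.mk_mul, QuotientGroup.mk_inv,
      QuotientGroup.mk_zpow, hn', inv_mul_cancel]
  have hc := CP_mul H η (CP_zpow H η hcpx n) (CP_mem H η ⟨(x ^ n)⁻¹ * y, hm⟩)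
  have e1 : x ^ n * (((⟨(x ^ n)⁻¹ * y, hm⟩ : H)) : G) = y := by
    show x ^ n * ((x ^ n)⁻¹ * y) = y
    rw [mul_inv_cancel_left]
  rwa [e1] at hc

lemma cp_of_char_eq (u v : G)
    (heq : ∀ h : H, LinearMap.trace ℂ W (η (conjHom H u h)) =
      LinearMap.trace ℂ W (η (conjHom H v h))) :
    CP H η (v * u⁻¹) := by
  intro h₀
  have hmem : u⁻¹ * (h₀ : G) * u ∈ H := conj_mem' H u h₀
  have e1 : conjHom H u ⟨u⁻¹ * (h₀ : G) * u, hmem⟩ = h₀ := conjHom_conj H u h₀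
  have e2 : (⟨(v * u⁻¹) * (h₀ : G) * (v * u⁻¹)⁻¹, hN.conj_mem _ h₀.2 (v * u⁻¹)⟩ : H) =
      conjHom H v ⟨u⁻¹ * (h₀ : G) * u, hmem⟩ := by
    ext
    show (v * u⁻¹) * (h₀ : G) * (v * u⁻¹)⁻¹ = v * (u⁻¹ * (h₀ : G) * u) * v⁻¹
    group
  rw [e2, ← heq ⟨u⁻¹ * (h₀ : G) * u, hmem⟩, e1]

lemma central_of_cp_all [Fintype G] [FiniteDimensional ℂ W]
    (hall : ∀ y : G, CP H η y) :
    pciMap H.subtype η ∈ Set.center (MonoidAlgebra ℂ G) := by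
  rw [Semigroup.mem_center_iff]
  intro b
  induction b using MonoidAlgebra.induction_on with
  | of g =>
    letI : Fintype ↥H := Fintype.ofFinite ↥H
    unfold pciMap
    rw [Finset.mul_sum, Finset.sum_mul]
    simp only [mul_smul_comm, smul_mul_assoc, ← map_mul]
    refine Fintype.sum_equiv
      ⟨fun k => ⟨g * (k : G) * g⁻¹, hN.conj_mem _ k.2 g⟩,
       fun k => ⟨g⁻¹ * (k : G) * g, conj_mem' H g k⟩,
       fun k => by ext; show g⁻¹ * (g * (k : G) * g⁻¹) * g = (k : G); group,
       fun k => by ext; show g * (g⁻¹ * (k : G) * g) * g⁻¹ = (k : G); group⟩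
      _ _ (fun k => ?_)
    simp only [Equiv.coe_fn_mk]
    have e1 : ((⟨g * (k : G) * g⁻¹, hN.conj_mem _ k.2 g⟩ : H))⁻¹ =
        ⟨g * ((k⁻¹ : H) : G) * g⁻¹, hN.conj_mem _ (k⁻¹).2 g⟩ := by
      ext; push_cast; group
    have e2 : LinearMap.trace ℂ W (η ((⟨g * (k : G) * g⁻¹, hN.conj_mem _ k.2 g⟩ : H))⁻¹) =
        LinearMap.trace ℂ W (η k⁻¹) := by
      rw [e1]; exact hall g k⁻¹
    have e3 : H.subtype (⟨g * (k : G) * g⁻¹, hN.conj_mem _ k.2 g⟩) * g = g * H.subtype k := by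
      show (g * (k : G) * g⁻¹) * g = g * (k : G)
      group
    rw [e2, e3]
  | add f1 f2 h1 h2 => rw [add_mul, mul_add, h1, h2]
  | smul r f hf => rw [smul_mul_assoc, mul_smul_comm, hf]

end CP

section Distinct
variable {G : Type*} [Group G] (H : Subgroup G) [hN : H.Normal]
variable {W : Type*} [AddCommGroup W] [Module ℂ W]
variable (η : Representation ℂ H W) (x : G) (p : ℕ)

lemma not_repEquiv_conj [Fintype G] [FiniteDimensional ℂ W]
    (hp : p.Prime) (hidx : H.index = p)
    (hx : ∀ g : G ⧸ H, g ∈ Subgroup.zpowers (QuotientGroup.mk x : G ⧸ H))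
    (hnc : pciMap H.subtype η ∉ Set.center (MonoidAlgebra ℂ G))
    {i j : ℕ} (hi : i < p) (hj : j < p) (hne : i ≠ j) :
    ¬ RepEquiv (η.comp (conjHom H (x ^ i))) (η.comp (conjHom H (x ^ j))) := by
  intro hre
  apply hnc
  have heq : ∀ h : H, LinearMap.trace ℂ W (η (conjHom H (x ^ i) h)) =
      LinearMap.trace ℂ W (η (conjHom H (x ^ j) h)) :=
    fun h => repEquiv_char _ _ hre h
  have hord := ord_eq H x p hidx hx
  have hxp := xp_mem H x p hord
  obtain ⟨m, hm0, hmp, hcpm⟩ : ∃ m, 0 < m ∧ m < p ∧ CP H η (x ^ m) := by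
    rcases Nat.lt_or_ge i j with hij | hij
    · refine ⟨j - i, by omega, by omega, ?_⟩
      have hcp := cp_of_char_eq H η (x ^ i) (x ^ j) heq
      have epow : x ^ j * (x ^ i)⁻¹ = x ^ (j - i) := by
        conv_lhs => rw [show j = (j - i) + i by omega]
        rw [pow_add, mul_inv_cancel_right]
      rwa [epow] at hcp
    · have hij' : j < i := by omega
      refine ⟨i - j, by omega, by omega, ?_⟩
      have hcp := cp_of_char_eq H η (x ^ j) (x ^ i) (fun h => (heq h).symm)
      have epow : x ^ i * (x ^ j)⁻¹ = x ^ (i - j) := by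
        conv_lhs => rw [show i = (i - j) + j by omega]
        rw [pow_add, mul_inv_cancel_right]
      rwa [epow] at hcp
  have hndvd : ¬ (p ∣ m) := by
    intro hdvd
    have := Nat.le_of_dvd hm0 hdvd
    omega
  have hcop : Nat.gcd m p = 1 := Nat.coprime_comm.mp (hp.coprime_iff_not_dvd.mpr hndvd)
  have hbez := Nat.gcd_eq_gcd_ab m p
  rw [hcop] at hbez
  have hcpx : CP H η x := by
    have c1 : CP H η ((x ^ m) ^ Nat.gcdA m p) := CP_zpow H η hcpm _
    have c2 : CP H η ((x ^ p) ^ Nat.gcdB m p) :=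
      CP_zpow H η (CP_mem H η ⟨x ^ p, hxp⟩) _
    have c3 := CP_mul H η c1 c2
    have e1 : (x ^ m) ^ Nat.gcdA m p * (x ^ p) ^ Nat.gcdB m p = x := by
      rw [← zpow_natCast x m, ← zpow_natCast x p, ← zpow_mul, ← zpow_mul, ← zpow_add]
      rw [show (m : ℤ) * Nat.gcdA m p + (p : ℤ) * Nat.gcdB m p = 1 from by
        rw [← hbez]; norm_num]
      exact zpow_one x
    rwa [e1] at c3
  exact central_of_cp_all H η (cp_all_of_cp_x H η x hx hcpx)

end Distinct

section TracePi
variable {M : Type*} [AddCommGroup M] [Module ℂ M] [FiniteDimensional ℂ M]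

lemma trace_pi {ι : Type*} [Fintype ι] [DecidableEq ι] (T : Module.End ℂ (ι → M)) :
    LinearMap.trace ℂ (ι → M) T =
      ∑ i : ι, LinearMap.trace ℂ M
        (LinearMap.proj i ∘ₗ T ∘ₗ LinearMap.single ℂ (fun _ => M) i) := by
  have hT : T = ∑ i : ι, LinearMap.single ℂ (fun _ => M) i ∘ₗ (LinearMap.proj i ∘ₗ T) := by
    apply LinearMap.ext
    intro v
    have h2 : (∑ i : ι, LinearMap.single ℂ (fun _ => M) i ∘ₗ (LinearMap.proj i ∘ₗ T)) v
        = ∑ i : ι, Pi.single i (T v i) := by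
      rw [LinearMap.sum_apply]
      exact Finset.sum_congr rfl fun i _ => rfl
    rw [h2, Finset.univ_sum_single]
  conv_lhs => rw [hT]
  rw [map_sum]
  refine Finset.sum_congr rfl (fun i _ => ?_)
  rw [LinearMap.trace_comp_comm', LinearMap.comp_assoc]

end TracePi

section Main
variable {G : Type*} [Group G] (H : Subgroup G) [hN : H.Normal]
variable {W : Type*} [AddCommGroup W] [Module ℂ W]
variable (η : Representation ℂ H W) (x : G) (p : ℕ)

/-- The coordinate map of the induced space. -/
noncomputable def PsiL : ↥(inducedSpace H η) →ₗ[ℂ] (Fin p → W) :=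
  LinearMap.pi (fun j => evLin H η x (j : ℕ))

/-- The inverse coordinate map of the induced space. -/
noncomputable def PhiL : (Fin p → W) →ₗ[ℂ] ↥(inducedSpace H η) :=
  ∑ j : Fin p, betaLin H η x (j : ℕ) ∘ₗ LinearMap.proj j

lemma PhiL_single (j : Fin p) (w : W) :
    PhiL H η x p (Pi.single j w) = betaLin H η x (j : ℕ) w := by
  unfold PhiL
  rw [LinearMap.sum_apply]
  rw [Finset.sum_eq_single_of_mem j (Finset.mem_univ j)]
  · simp [LinearMap.proj_apply, Pi.single_eq_same]
  · intro i _ hne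
    simp [LinearMap.proj_apply, Pi.single_eq_of_ne hne]

lemma PsiL_PhiL (hord : orderOf (QuotientGroup.mk x : G ⧸ H) = p) :
    PsiL H η x p ∘ₗ PhiL H η x p = LinearMap.id := by
  apply LinearMap.ext
  intro v
  funext j
  show (PsiL H η x p) ((PhiL H η x p) v) j = v j
  unfold PsiL PhiL
  rw [LinearMap.sum_apply, map_sum, Finset.sum_apply]
  rw [Finset.sum_eq_single_of_mem j (Finset.mem_univ j)]
  · rw [LinearMap.pi_apply]
    show betaFn H η x (j : ℕ) (v j) (x ^ (j : ℕ)) = v j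
    exact betaFn_self H η x _ _
  · intro i _ hne
    rw [LinearMap.pi_apply]
    show betaFn H η x (i : ℕ) (v i) (x ^ (j : ℕ)) = 0
    exact betaFn_ne H η x p hord j.2 i.2 (fun hv => hne (Fin.val_injective hv.symm)) _

lemma PhiL_PsiL (hp : 0 < p) (hord : orderOf (QuotientGroup.mk x : G ⧸ H) = p)
    (hx : ∀ g : G ⧸ H, g ∈ Subgroup.zpowers (QuotientGroup.mk x : G ⧸ H)) :
    PhiL H η x p ∘ₗ PsiL H η x p = LinearMap.id := by
  apply LinearMap.ext
  intro f
  show (PhiL H η x p) ((PsiL H η x p) f) = f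
  unfold PhiL PsiL
  rw [LinearMap.sum_apply]
  have h1 : ∀ j : Fin p, (betaLin H η x (j : ℕ) ∘ₗ LinearMap.proj j)
      ((LinearMap.pi fun i : Fin p => evLin H η x (i : ℕ)) f)
      = betaLin H η x (j : ℕ) (evLin H η x (j : ℕ) f) := fun j => rfl
  simp only [h1]
  rw [Fin.sum_univ_eq_sum_range (fun j => betaLin H η x j (evLin H η x j f)) p]
  exact sum_betaLin H η x p hp hord hx f

/-- The induced space is equivalent to `Fin p → W`. -/
noncomputable def inducedEquiv (hp : 0 < p)
    (hord : orderOf (QuotientGroup.mk x : G ⧸ H) = p)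
    (hx : ∀ g : G ⧸ H, g ∈ Subgroup.zpowers (QuotientGroup.mk x : G ⧸ H)) :
    ↥(inducedSpace H η) ≃ₗ[ℂ] (Fin p → W) :=
  LinearEquiv.ofLinear (PsiL H η x p) (PhiL H η x p)
    (PsiL_PhiL H η x p hord) (PhiL_PsiL H η x p hp hord hx)

lemma finrank_induced [FiniteDimensional ℂ W] (hp : 0 < p)
    (hord : orderOf (QuotientGroup.mk x : G ⧸ H) = p)
    (hx : ∀ g : G ⧸ H, g ∈ Subgroup.zpowers (QuotientGroup.mk x : G ⧸ H)) :
    finrank ℂ ↥(inducedSpace H η) = p * finrank ℂ W := by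
  rw [LinearEquiv.finrank_eq (inducedEquiv H η x p hp hord hx)]
  rw [Module.finrank_pi_fintype]
  simp [Finset.sum_const, Finset.card_univ]

end Main

section Traces
variable {G : Type*} [Group G] (H : Subgroup G) [hN : H.Normal]
variable {W : Type*} [AddCommGroup W] [Module ℂ W]
variable (η : Representation ℂ H W) (x : G) (p : ℕ)

lemma conj_entry_apply (hp : 0 < p) (hord : orderOf (QuotientGroup.mk x : G ⧸ H) = p)
    (hx : ∀ g : G ⧸ H, g ∈ Subgroup.zpowers (QuotientGroup.mk x : G ⧸ H))
    (g : G) (j : Fin p) (w : W) :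
    (LinearMap.proj j ∘ₗ ((inducedEquiv H η x p hp hord hx).conj (inducedRep H η g)) ∘ₗ
      LinearMap.single ℂ (fun _ => W) j) w
      = betaFn H η x (j : ℕ) w (x ^ (j : ℕ) * g) := by
  simp only [LinearMap.comp_apply, LinearEquiv.conj_apply, LinearMap.proj_apply,
    LinearEquiv.coe_coe]
  have h1 : (LinearMap.single ℂ (fun _ => W) j) w = Pi.single j w := rfl
  rw [h1]
  have h2 : (inducedEquiv H η x p hp hord hx).symm (Pi.single j w) =
      betaLin H η x (j : ℕ) w := by
    show (LinearEquiv.ofLinear (PsiL H η x p) (PhiL H η x p)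
      (PsiL_PhiL H η x p hord) (PhiL_PsiL H η x p hp hord hx)).symm (Pi.single j w) = _
    rw [LinearEquiv.ofLinear_symm_apply]
    exact PhiL_single H η x p j w
  rw [h2]
  show (inducedEquiv H η x p hp hord hx)
      ((inducedRep H η g) (betaLin H η x (j : ℕ) w)) j = _
  unfold inducedEquiv
  rw [LinearEquiv.ofLinear_apply]
  rfl

lemma trace_induced_mem [FiniteDimensional ℂ W] (hp : 0 < p)
    (hord : orderOf (QuotientGroup.mk x : G ⧸ H) = p)
    (hx : ∀ g : G ⧸ H, g ∈ Subgroup.zpowers (QuotientGroup.mk x : G ⧸ H))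
    {g : G} (hg : g ∈ H) :
    LinearMap.trace ℂ ↥(inducedSpace H η) (inducedRep H η g) =
      ∑ j ∈ Finset.range p, LinearMap.trace ℂ W (η (conjHom H (x ^ j) ⟨g, hg⟩)) := by
  classical
  rw [← LinearMap.trace_conj' (inducedRep H η g) (inducedEquiv H η x p hp hord hx)]
  rw [trace_pi]
  rw [← Fin.sum_univ_eq_sum_range
    (fun j => LinearMap.trace ℂ W (η (conjHom H (x ^ j) ⟨g, hg⟩))) p]
  refine Finset.sum_congr rfl (fun j _ => ?_)
  congr 1
  apply LinearMap.ext
  intro w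
  rw [conj_entry_apply H η x p hp hord hx g j w]
  unfold betaFn
  have hmem : x ^ (j : ℕ) * g * (x ^ (j : ℕ))⁻¹ ∈ H := hN.conj_mem _ hg _
  rw [dif_pos hmem]
  rfl

lemma trace_induced_not_mem [FiniteDimensional ℂ W] (hp : 0 < p)
    (hord : orderOf (QuotientGroup.mk x : G ⧸ H) = p)
    (hx : ∀ g : G ⧸ H, g ∈ Subgroup.zpowers (QuotientGroup.mk x : G ⧸ H))
    {g : G} (hg : g ∉ H) :
    LinearMap.trace ℂ ↥(inducedSpace H η) (inducedRep H η g) = 0 := by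
  classical
  rw [← LinearMap.trace_conj' (inducedRep H η g) (inducedEquiv H η x p hp hord hx)]
  rw [trace_pi]
  rw [Finset.sum_eq_zero]
  intro j _
  have hzero : (LinearMap.proj j ∘ₗ
      ((inducedEquiv H η x p hp hord hx).conj (inducedRep H η g)) ∘ₗ
      LinearMap.single ℂ (fun _ => W) j) = 0 := by
    apply LinearMap.ext
    intro w
    rw [conj_entry_apply H η x p hp hord hx g j w]
    unfold betaFn
    rw [dif_neg]
    · rfl
    · intro hmem
      apply hg
      have h2 := conj_mem' H (x ^ (j : ℕ)) ⟨_, hmem⟩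
      simpa [mul_assoc] using h2
  rw [hzero, map_zero]
end Traces

section Qop
variable {G : Type*} [Group G] (H : Subgroup G) [hN : H.Normal]
variable {W : Type*} [AddCommGroup W] [Module ℂ W]
variable (η : Representation ℂ H W) (x : G) (p : ℕ)
variable [Fintype ↥H]

/-- The action of the central idempotent of `η^{x^j}` on the induced representation. -/
noncomputable def Qop (j : ℕ) : Module.End ℂ ↥(inducedSpace H η) :=
  ∑ h : H, (((finrank ℂ W : ℂ) / (Nat.card ↥H : ℂ)) *
    LinearMap.trace ℂ W ((η.comp (conjHom H (x ^ j))) h⁻¹)) • inducedRep H η (h : G)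

lemma Qop_maps (j : ℕ) (U : Submodule ℂ ↥(inducedSpace H η))
    (hU : ∀ (g : G) (f : ↥(inducedSpace H η)), f ∈ U → inducedRep H η g f ∈ U)
    {f : ↥(inducedSpace H η)} (hf : f ∈ U) : Qop H η x j f ∈ U := by
  unfold Qop
  rw [LinearMap.sum_apply]
  apply Submodule.sum_mem
  intro h _
  rw [LinearMap.smul_apply]
  exact U.smul_mem _ (hU _ _ hf)

lemma Qop_apply [Fintype G] [FiniteDimensional ℂ W]
    (hη : IsIrreducibleRep η) (hp : p.Prime) (hidx : H.index = p)
    (hord : orderOf (QuotientGroup.mk x : G ⧸ H) = p)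
    (hx : ∀ g : G ⧸ H, g ∈ Subgroup.zpowers (QuotientGroup.mk x : G ⧸ H))
    (hnc : pciMap H.subtype η ∉ Set.center (MonoidAlgebra ℂ G))
    {j : ℕ} (hj : j < p) (f : ↥(inducedSpace H η)) :
    Qop H η x j f = betaLin H η x j ((f : G → W) (x ^ j)) := by
  haveI : Nontrivial W := hη.1
  apply Subtype.ext
  funext g
  obtain ⟨i, hi, hgi⟩ := idx_exists H x p hp.pos hord hx g
  have hcoe : ((Qop H η x j f : ↥(inducedSpace H η)) : G → W) g
      = ∑ h : H, (((finrank ℂ W : ℂ) / (Nat.card ↥H : ℂ)) *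
        LinearMap.trace ℂ W ((η.comp (conjHom H (x ^ j))) h⁻¹)) • ((f : G → W) (g * h)) := by
    unfold Qop
    rw [LinearMap.sum_apply, Submodule.coe_sum, Finset.sum_apply]
    exact Finset.sum_congr rfl fun h _ => rfl
  have hval : ∀ h : H, (f : G → W) (g * (h : G)) =
      η ⟨g * (x ^ i)⁻¹, hgi⟩ ((η.comp (conjHom H (x ^ i))) h ((f : G → W) (x ^ i))) := by
    intro h
    have e : (g * (h : G)) * (x ^ i)⁻¹ = (g * (x ^ i)⁻¹) * (x ^ i * (h : G) * (x ^ i)⁻¹) := by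
      group
    have hmem : (g * (h : G)) * (x ^ i)⁻¹ ∈ H := by
      rw [e]; exact H.mul_mem hgi (hN.conj_mem _ h.2 _)
    rw [induced_apply_coset H η x f.2 hmem]
    have e2 : (⟨(g * (h : G)) * (x ^ i)⁻¹, hmem⟩ : H) =
        ⟨g * (x ^ i)⁻¹, hgi⟩ * conjHom H (x ^ i) h := by
      ext
      show (g * (h : G)) * (x ^ i)⁻¹ = (g * (x ^ i)⁻¹) * (x ^ i * (h : G) * (x ^ i)⁻¹)
      exact e
    rw [e2, map_mul, Module.End.mul_apply]
    rfl
  rw [hcoe]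
  simp only [hval]
  have hfact : ∑ h : H, (((finrank ℂ W : ℂ) / (Nat.card ↥H : ℂ)) *
        LinearMap.trace ℂ W ((η.comp (conjHom H (x ^ j))) h⁻¹)) •
        (η ⟨g * (x ^ i)⁻¹, hgi⟩) ((η.comp (conjHom H (x ^ i))) h ((f : G → W) (x ^ i)))
      = (η ⟨g * (x ^ i)⁻¹, hgi⟩) ((∑ h : H, (((finrank ℂ W : ℂ) / (Nat.card ↥H : ℂ)) *
          LinearMap.trace ℂ W ((η.comp (conjHom H (x ^ j))) h⁻¹)) •
          (η.comp (conjHom H (x ^ i))) h) ((f : G → W) (x ^ i))) := by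
    rw [LinearMap.sum_apply, map_sum]
    refine Finset.sum_congr rfl fun h _ => ?_
    rw [LinearMap.smul_apply, map_smul]
  rw [hfact]
  have hd : (finrank ℂ W : ℂ) ≠ 0 :=
    Nat.cast_ne_zero.mpr (finrank_pos (R := ℂ) (M := W)).ne'
  have hcard : (Nat.card ↥H : ℂ) ≠ 0 := by
    rw [Nat.card_eq_fintype_card]
    exact Nat.cast_ne_zero.mpr Fintype.card_ne_zero
  by_cases hij : i = j
  · subst hij
    have hop : (∑ h : H, (((finrank ℂ W : ℂ) / (Nat.card ↥H : ℂ)) *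
        LinearMap.trace ℂ W ((η.comp (conjHom H (x ^ i))) h⁻¹)) •
        (η.comp (conjHom H (x ^ i))) h) = (1 : Module.End ℂ W) := by
      have hs := sum_char_self (η.comp (conjHom H (x ^ i)))
        (irr_comp_conj H η (x ^ i) hη)
      calc ∑ h : H, (((finrank ℂ W : ℂ) / (Nat.card ↥H : ℂ)) *
            LinearMap.trace ℂ W ((η.comp (conjHom H (x ^ i))) h⁻¹)) •
            (η.comp (conjHom H (x ^ i))) h
          = ((finrank ℂ W : ℂ) / (Nat.card ↥H : ℂ)) •
            ∑ h : H, (LinearMap.trace ℂ W ((η.comp (conjHom H (x ^ i))) h⁻¹)) •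
            (η.comp (conjHom H (x ^ i))) h := by
            rw [Finset.smul_sum]
            exact Finset.sum_congr rfl fun h _ => (smul_smul _ _ _).symm
        _ = (1 : Module.End ℂ W) := by
            rw [hs, smul_smul]
            rw [show ((finrank ℂ W : ℂ) / (Nat.card ↥H : ℂ)) *
              ((Fintype.card ↥H : ℂ) / (finrank ℂ W : ℂ)) = 1 from by
                rw [Nat.card_eq_fintype_card]
                field_simp]
            rw [one_smul]
    rw [hop, Module.End.one_apply]
    show _ = betaFn H η x i ((f : G → W) (x ^ i)) g
    unfold betaFn
    rw [dif_pos hgi]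
  · have hne : ¬ RepEquiv (η.comp (conjHom H (x ^ j))) (η.comp (conjHom H (x ^ i))) :=
      not_repEquiv_conj H η x p hp hidx hx hnc hj hi (fun hv => hij hv.symm)
    have hop : (∑ h : H, (((finrank ℂ W : ℂ) / (Nat.card ↥H : ℂ)) *
        LinearMap.trace ℂ W ((η.comp (conjHom H (x ^ j))) h⁻¹)) •
        (η.comp (conjHom H (x ^ i))) h) = 0 := by
      have hs := sum_char_other (η.comp (conjHom H (x ^ j))) (η.comp (conjHom H (x ^ i)))
        (irr_comp_conj H η (x ^ j) hη) (irr_comp_conj H η (x ^ i) hη) hne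
      calc ∑ h : H, (((finrank ℂ W : ℂ) / (Nat.card ↥H : ℂ)) *
            LinearMap.trace ℂ W ((η.comp (conjHom H (x ^ j))) h⁻¹)) •
            (η.comp (conjHom H (x ^ i))) h
          = ((finrank ℂ W : ℂ) / (Nat.card ↥H : ℂ)) •
            ∑ h : H, (LinearMap.trace ℂ W ((η.comp (conjHom H (x ^ j))) h⁻¹)) •
            (η.comp (conjHom H (x ^ i))) h := by
            rw [Finset.smul_sum]
            exact Finset.sum_congr rfl fun h _ => (smul_smul _ _ _).symm
        _ = 0 := by rw [hs, smul_zero]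
    rw [hop, LinearMap.zero_apply, map_zero]
    show (0 : W) = betaFn H η x j ((f : G → W) (x ^ j)) g
    unfold betaFn
    rw [dif_neg]
    intro hgj
    exact hij (idx_unique H x p hord hi hj hgi hgj)

end Qop

/-- Let `G` be a finite group, `H ⊴ G` of prime index `p`, `x ∈ G` with `xH`
generating `G/H`, and `η` an irreducible complex representation of `H` with primitive
central idempotent `e_η ∈ ℂ[H] ⊆ ℂ[G]`.  If `e_η` is not central in `ℂ[G]`, then the
induced representations `η↑`, `η^x↑`, …, `η^{x^{p-1}}↑` are all equivalent to a single
irreducible representation `ρ = η↑` of `G`, and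
`e_ρ = e_η + e_{η^x} + ⋯ + e_{η^{x^{p-1}}}`, where `η^{x^j} (h) = η (x^j h x^{-j})`. -/
theorem stmt17 {G : Type*} [Group G] [Fintype G] (H : Subgroup G) [H.Normal]
    (p : ℕ) (hp : p.Prime) (hidx : H.index = p)
    (x : G) (hx : ∀ g : G ⧸ H, g ∈ Subgroup.zpowers (QuotientGroup.mk x : G ⧸ H))
    {W : Type*} [AddCommGroup W] [Module ℂ W] [FiniteDimensional ℂ W]
    (η : Representation ℂ H W) (hη : IsIrreducibleRep η)
    (hnc : pciMap H.subtype η ∉ Set.center (MonoidAlgebra ℂ G)) :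
    IsIrreducibleRep (inducedRep H η) ∧
    (∀ j : ℕ, j < p →
      RepEquiv (inducedRep H (η.comp (conjHom H (x ^ j)))) (inducedRep H η)) ∧
    pciMap (MonoidHom.id G) (inducedRep H η) =
      ∑ j ∈ Finset.range p, pciMap H.subtype (η.comp (conjHom H (x ^ j))) := by
  classical
  letI instH : Fintype ↥H := Fintype.ofFinite ↥H
  haveI : Nontrivial W := hη.1
  have hord : orderOf (QuotientGroup.mk x : G ⧸ H) = p := ord_eq H x p hidx hx
  have hxp : x ^ p ∈ H := xp_mem H x p hord
  have hp0 : 0 < p := hp.pos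
  refine ⟨⟨?_, ?_⟩, ?_, ?_⟩
  · -- Nontrivial induced space
    obtain ⟨w0, hw0⟩ := exists_ne (0 : W)
    refine ⟨⟨betaLin H η x 0 w0, 0, fun hc => ?_⟩⟩
    have h2 := congrArg (fun f : ↥(inducedSpace H η) => (f : G → W) (x ^ 0)) hc
    simp only [ZeroMemClass.coe_zero, Pi.zero_apply] at h2
    rw [betaLin_coe, betaFn_self] at h2
    exact hw0 h2
  · -- no proper invariant subspaces
    intro U hU
    by_cases hU0 : U = ⊥
    · exact Or.inl hU0
    right
    obtain ⟨f0, hf0U, hf0⟩ := (Submodule.ne_bot_iff U).mp hU0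
    have hex : ∃ g0 : G, (f0 : G → W) g0 ≠ 0 := by
      by_contra hall
      push_neg at hall
      exact hf0 (Subtype.ext (funext fun g => hall g))
    obtain ⟨g0, hg0⟩ := hex
    obtain ⟨i0, hi0, hgi0⟩ := idx_exists H x p hp0 hord hx g0
    have hvi : (f0 : G → W) (x ^ i0) ≠ 0 := by
      intro hz
      apply hg0
      rw [induced_apply_coset H η x f0.2 hgi0, hz, map_zero]
    set Mj : ℕ → Submodule ℂ W := fun j => U.comap (betaLin H η x j) with hMj
    have hMmem : ∀ j w, w ∈ Mj j ↔ betaLin H η x j w ∈ U := fun j w => Iff.rfl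
    have k1 : ∀ j, Mj j = ⊥ ∨ Mj j = ⊤ := by
      intro j
      apply (irr_comp_conj H η (x ^ j) hη).2
      intro h w hw
      rw [hMmem] at hw ⊢
      rw [show (η.comp (conjHom H (x ^ j))) h w = η (conjHom H (x ^ j) h) w from rfl]
      rw [← betaLin_conj_action H η x j h w]
      exact hU _ _ hw
    have k3 : ∀ j, Mj (j + 1) = ⊤ → Mj j = ⊤ := by
      intro j hj
      rw [Submodule.eq_top_iff']
      intro w
      rw [hMmem, ← betaLin_x_action_succ H η x j w]
      apply hU
      rw [← hMmem, hj]
      trivial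
    have hdesc : ∀ k j, Mj (j + k) = ⊤ → Mj j = ⊤ := by
      intro k
      induction k with
      | zero => intro j h; simpa using h
      | succ k ih => intro j h; exact ih j (k3 (j + k) h)
    have k2 : Mj i0 = ⊤ := by
      rcases k1 i0 with hbot | htop
      · exfalso
        have hm : (f0 : G → W) (x ^ i0) ∈ Mj i0 := by
          rw [hMmem, ← Qop_apply H η x p hη hp hidx hord hx hnc hi0 f0]
          exact Qop_maps H η x i0 U hU hf0U
        rw [hbot] at hm
        exact hvi ((Submodule.mem_bot ℂ).mp hm)
      · exact htop
    have k0 : Mj 0 = ⊤ := hdesc i0 0 (by simpa using k2)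
    have kp1 : Mj (p - 1) = ⊤ := by
      rw [Submodule.eq_top_iff']
      intro w
      rw [hMmem]
      have hw' : η (⟨x ^ p, hxp⟩ : H) (η ((⟨x ^ p, hxp⟩ : H)⁻¹) w) = w := by
        rw [← Module.End.mul_apply, ← map_mul, mul_inv_cancel, map_one, Module.End.one_apply]
      rw [← hw', ← betaLin_x_action_zero H η x p hp0 hxp]
      apply hU
      rw [← hMmem, k0]
      trivial
    have kall : ∀ j, j < p → Mj j = ⊤ := by
      intro j hjp
      apply hdesc (p - 1 - j) j
      rw [show j + (p - 1 - j) = p - 1 by omega]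
      exact kp1
    rw [Submodule.eq_top_iff']
    intro f
    rw [← sum_betaLin H η x p hp0 hord hx f]
    apply Submodule.sum_mem
    intro j hjr
    have hj : evLin H η x j f ∈ Mj j := by
      rw [kall j (Finset.mem_range.mp hjr)]
      trivial
    exact (hMmem _ _).mp hj
  · -- equivalences of the conjugate induced representations
    intro j _
    exact repEquiv_induced_conj H η (x ^ j)
  · -- identity of central idempotents
    have hfin : finrank ℂ ↥(inducedSpace H η) = p * finrank ℂ W :=
      finrank_induced H η x p hp0 hord hx
    have hcardG : Nat.card G = p * Nat.card ↥H := by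
      rw [← Subgroup.index_mul_card H, hidx]
    have hpne : (p : ℂ) ≠ 0 := Nat.cast_ne_zero.mpr hp0.ne'
    have hcoef : ((finrank ℂ ↥(inducedSpace H η) : ℂ) / (Nat.card G : ℂ))
        = (finrank ℂ W : ℂ) / (Nat.card ↥H : ℂ) := by
      rw [hfin, hcardG]
      push_cast
      rw [mul_div_mul_left _ _ hpne]
    unfold pciMap
    rw [Subsingleton.elim (Fintype.ofFinite G) ‹Fintype G›]
    simp only [MonoidHom.id_apply]
    have hzero : ∀ g ∈ (Finset.univ : Finset G),
        ((finrank ℂ ↥(inducedSpace H η) : ℂ) / (Nat.card G : ℂ) *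
          LinearMap.trace ℂ _ (inducedRep H η g⁻¹)) •
          MonoidAlgebra.of ℂ G g ≠ 0 → g ∈ H := by
      intro g _ hne
      by_contra hgH
      apply hne
      have hginv : g⁻¹ ∉ H := fun hc => hgH (by simpa using H.inv_mem hc)
      rw [trace_induced_not_mem H η x p hp0 hord hx hginv, mul_zero, zero_smul]
    rw [← Finset.sum_filter_of_ne hzero]
    rw [Finset.sum_subtype (p := (· ∈ H)) (Finset.univ.filter (· ∈ H)) (by simp) (fun g =>
      ((finrank ℂ ↥(inducedSpace H η) : ℂ) / (Nat.card G : ℂ) *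
        LinearMap.trace ℂ _ (inducedRep H η g⁻¹)) • MonoidAlgebra.of ℂ G g)]
    have hterm : ∀ k : H,
        ((finrank ℂ ↥(inducedSpace H η) : ℂ) / (Nat.card G : ℂ) *
          LinearMap.trace ℂ _ (inducedRep H η ((k : G))⁻¹)) •
          MonoidAlgebra.of ℂ G (k : G)
        = ∑ j ∈ Finset.range p,
          ((finrank ℂ W : ℂ) / (Nat.card ↥H : ℂ) *
            LinearMap.trace ℂ W ((η.comp (conjHom H (x ^ j))) k⁻¹)) •
            MonoidAlgebra.of ℂ G (H.subtype k) := by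
      intro k
      have hmem : ((k : G))⁻¹ ∈ H := H.inv_mem k.2
      rw [trace_induced_mem H η x p hp0 hord hx hmem, hcoef, Finset.mul_sum,
        Finset.sum_smul]
      refine Finset.sum_congr rfl fun j _ => ?_
      have he : (⟨((k : G))⁻¹, hmem⟩ : H) = k⁻¹ := by ext; rfl
      rw [he]
      rfl
    rw [Finset.sum_congr rfl (fun k _ => hterm k)]
    exact Finset.sum_comm
end
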